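/- arXiv:1507.06843 — 7 statements merged into one kernel-verified Lean document; each statement's English description precedes it below -/
import Mathlib

section
/- Let L ⊆ S_n be a linear subspace and c ∈ S_n. The problem (K_n,L,c) is weakly feasible, i.e. (L+c) ∩ int(K_n) = ∅ but (L+c) ∩ K_n ≠ ∅, if and only if both of the following hold: (i) there exists x ∈ L+c that is positive semidefinite, and (ii) there exists a nonzero y ∈ L^⊥ ∩ K_n with ⟨y,c⟩ = 0. -/
open Matrix

attribute [local instance] Matrix.frobeniusNormedAddCommGroup

noncomputable section

abbrev MS (n : ℕ) := Matrix (Fin n) (Fin n) ℝ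

attribute [local instance] Matrix.frobeniusNormedSpace

namespace WeakFeasAux

variable {n : ℕ}

lemma trace_mul_eq (y x : MS n) : (y * x).trace = ∑ i, ∑ j, y i j * x j i := by
  simp [Matrix.trace, Matrix.mul_apply, Matrix.diag]

lemma trace_mul_vecMulVec (y : MS n) (v : Fin n → ℝ) :
    (y * vecMulVec v v).trace = v ⬝ᵥ y *ᵥ v := by
  rw [trace_mul_eq]
  simp only [vecMulVec_apply, dotProduct, mulVec, Finset.mul_sum]
  congr 1; ext i; congr 1; ext j; ring

lemma single_pair (A : MS n) (i : Fin n) :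
    Pi.single (M := fun _ => ℝ) i 1 ⬝ᵥ A *ᵥ Pi.single i 1 = A i i := by
  simp [mulVec_single, dotProduct, Pi.single_apply]

lemma psd_trace_zero {A : MS n} (hA : A.PosSemidef) (h : A.trace = 0) : A = 0 := by
  have hdiag : ∀ i, 0 ≤ A i i := by
    intro i
    have := hA.dotProduct_mulVec_nonneg (Pi.single i 1)
    rwa [star_trivial, single_pair] at this
  have hzero : ∀ i, A i i = 0 := by
    have := (Finset.sum_eq_zero_iff_of_nonneg (fun i _ => hdiag i)).mp h
    exact fun i => this i (Finset.mem_univ i)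
  ext i j
  have h1 : A *ᵥ Pi.single j 1 = 0 := by
    rw [← hA.dotProduct_mulVec_zero_iff]
    rw [star_trivial, single_pair, hzero j]
  have := congrFun h1 i
  simpa [mulVec_single] using this

open scoped MatrixOrder in
lemma pd_pairing_pos {x y : MS n} (hx : x.PosDef) (hy : y.PosSemidef) (hy0 : y ≠ 0) :
    (y * x).trace ≠ 0 := by
  intro h
  set s := CFC.sqrt x with hs
  have hsh : sᴴ = s := by
    have := (CFC.sqrt_nonneg x).isHermitian; rw [sub_zero] at this; exact this
  have hss : s * s = x := CFC.sqrt_mul_sqrt_self x hx.posSemidef.nonneg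
  have htr : (s * y * s).trace = 0 := by
    rw [trace_mul_cycle, hss, trace_mul_comm, h]
  have hpsd : (s * y * s).PosSemidef := by
    have := hy.conjTranspose_mul_mul_same s
    rwa [hsh] at this
  have h0 : s * y * s = 0 := psd_trace_zero hpsd htr
  have hdet : IsUnit s.det := by
    rw [isUnit_iff_ne_zero]
    have hd : x.det = s.det * s.det := by rw [← hss, det_mul]
    have hx0 := hx.det_pos
    intro hd0
    rw [hd, hd0, mul_zero] at hx0
    exact lt_irrefl _ hx0
  apply hy0
  have hy' : s⁻¹ * (s * y * s) * s⁻¹ = y := by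
    rw [Matrix.mul_assoc s y s, ← Matrix.mul_assoc s⁻¹ s (y * s), nonsing_inv_mul _ hdet,
      one_mul, Matrix.mul_assoc y s s⁻¹, mul_nonsing_inv _ hdet, mul_one]
  rw [← hy', h0, Matrix.mul_zero, Matrix.zero_mul]

lemma entry_le_frobenius (A : MS n) (i j : Fin n) : |A i j| ≤ ‖A‖ := by
  rw [frobenius_norm_def]
  have h1 : |A i j| = (‖A i j‖ ^ (2:ℝ)) ^ ((1:ℝ) / 2) := by
    rw [← Real.rpow_mul (norm_nonneg _)]
    norm_num [Real.norm_eq_abs]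
  rw [h1]
  apply Real.rpow_le_rpow (by positivity) _ (by norm_num)
  calc ‖A i j‖ ^ (2:ℝ) ≤ ∑ j', ‖A i j'‖ ^ (2:ℝ) :=
        Finset.single_le_sum (f := fun k => ‖A i k‖ ^ (2:ℝ)) (fun k _ => by positivity)
          (Finset.mem_univ j)
    _ ≤ ∑ i', ∑ j', ‖A i' j'‖ ^ (2:ℝ) :=
        Finset.single_le_sum (f := fun k => ∑ j', ‖A k j'‖ ^ (2:ℝ))
          (fun k _ => Finset.sum_nonneg fun _ _ => by positivity) (Finset.mem_univ i)

lemma quad_abs_le (A : MS n) (v : Fin n → ℝ) (hv : ∀ i, |v i| ≤ 1) :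
    |v ⬝ᵥ A *ᵥ v| ≤ (n:ℝ)^2 * ‖A‖ := by
  have h1 : |v ⬝ᵥ A *ᵥ v| ≤ ∑ i, ∑ j, |v i| * |A i j| * |v j| := by
    simp only [dotProduct, mulVec, Finset.mul_sum]
    refine (Finset.abs_sum_le_sum_abs _ _).trans (Finset.sum_le_sum fun i _ => ?_)
    refine (Finset.abs_sum_le_sum_abs _ _).trans (Finset.sum_le_sum fun j _ => ?_)
    rw [abs_mul, abs_mul]
    ring_nf
    exact le_refl _
  refine h1.trans ?_
  have h2 : ∀ i j : Fin n, |v i| * |A i j| * |v j| ≤ ‖A‖ := by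
    intro i j
    have hA := entry_le_frobenius A i j
    calc |v i| * |A i j| * |v j| ≤ 1 * |A i j| * 1 := by
          gcongr
          · exact hv i
          · exact hv j
      _ = |A i j| := by ring
      _ ≤ ‖A‖ := hA
  calc ∑ i, ∑ j, |v i| * |A i j| * |v j| ≤ ∑ _i : Fin n, ∑ _j : Fin n, ‖A‖ :=
        Finset.sum_le_sum fun i _ => Finset.sum_le_sum fun j _ => h2 i j
    _ = (n:ℝ)^2 * ‖A‖ := by simp [Finset.sum_const]; ring

def posQF (n : ℕ) : Set (MS n) := {x | ∀ v : Fin n → ℝ, v ≠ 0 → 0 < v ⬝ᵥ x *ᵥ v}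

lemma dotProduct_self_pos' {v : Fin n → ℝ} (hv : v ≠ 0) : 0 < v ⬝ᵥ v := by
  have h : ∃ i, v i ≠ 0 := by
    by_contra h; push_neg at h; exact hv (funext h)
  obtain ⟨i, hi⟩ := h
  exact Finset.sum_pos' (fun j _ => mul_self_nonneg _)
    ⟨i, Finset.mem_univ i, mul_self_pos.mpr hi⟩

lemma convex_posQF : Convex ℝ (posQF n) := by
  intro a ha b hb p q hp hq hpq v hv
  have hav := ha v hv
  have hbv := hb v hv
  have hexp : v ⬝ᵥ (p • a + q • b) *ᵥ v = p * (v ⬝ᵥ a *ᵥ v) + q * (v ⬝ᵥ b *ᵥ v) := by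
    rw [add_mulVec, dotProduct_add, smul_mulVec, smul_mulVec,
      dotProduct_smul, dotProduct_smul]
    simp [smul_eq_mul]
  rw [hexp]
  rcases eq_or_lt_of_le hp with hp0 | hp0
  · rw [← hp0] at hpq ⊢
    simp only [zero_mul, zero_add] at hpq ⊢
    rw [hpq] at *
    nlinarith
  · nlinarith

lemma isOpen_posQF : IsOpen (posQF n) := by
  refine Metric.isOpen_iff.mpr ?_
  intro x hx
  rcases Nat.eq_zero_or_pos n with h0 | hn
  · subst h0
    exact ⟨1, one_pos, fun A _ v hv => absurd (funext fun i => i.elim0) hv⟩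
  haveI : Nonempty (Fin n) := ⟨⟨0, hn⟩⟩
  set Sph := Metric.sphere (0 : Fin n → ℝ) 1 with hSph
  have hcomp : IsCompact Sph := isCompact_sphere 0 1
  have hne : Sph.Nonempty := by
    refine ⟨fun _ => 1, ?_⟩
    simp only [hSph, Metric.mem_sphere, dist_zero_right]
    rw [pi_norm_const]
    norm_num
  have hcont : Continuous fun v : Fin n → ℝ => v ⬝ᵥ x *ᵥ v := by
    simp only [dotProduct, mulVec]
    exact continuous_finset_sum _ fun i _ => (continuous_apply i).mul
      (continuous_finset_sum _ fun j _ => continuous_const.mul (continuous_apply j))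
  obtain ⟨v₀, hv₀S, hmin⟩ := hcomp.exists_isMinOn hne hcont.continuousOn
  have hv₀norm : ‖v₀‖ = 1 := by simpa [hSph] using hv₀S
  have hv₀ : v₀ ≠ 0 := by
    intro h; rw [h] at hv₀norm; simp at hv₀norm
  set m := v₀ ⬝ᵥ x *ᵥ v₀ with hm_def
  have hm : 0 < m := hx v₀ hv₀
  refine ⟨m / ((n:ℝ)^2 + 1), by positivity, ?_⟩
  intro A hA
  have hAx : ‖A - x‖ < m / ((n:ℝ)^2 + 1) := by
    rwa [Metric.mem_ball, dist_eq_norm] at hA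
  intro v hv
  set w := ‖v‖⁻¹ • v with hw_def
  have hw : ‖w‖ = 1 := by
    rw [hw_def, norm_smul]
    simp [norm_pos_iff.mpr hv, ne_of_gt (norm_pos_iff.mpr hv)]
  have hwS : w ∈ Sph := by simp [hSph, hw]
  have h1 : m ≤ w ⬝ᵥ x *ᵥ w := hmin hwS
  have h2 : |w ⬝ᵥ (A - x) *ᵥ w| ≤ (n:ℝ)^2 * ‖A - x‖ := by
    refine quad_abs_le _ _ fun i => ?_
    have := norm_le_pi_norm w i
    rw [hw] at this
    simpa [Real.norm_eq_abs] using this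
  have hsplit : w ⬝ᵥ A *ᵥ w = w ⬝ᵥ x *ᵥ w + w ⬝ᵥ (A - x) *ᵥ w := by
    rw [sub_mulVec, dotProduct_sub]; ring
  have hn2 : (0:ℝ) ≤ (n:ℝ)^2 := by positivity
  have h3 : 0 < w ⬝ᵥ A *ᵥ w := by
    have hkey : (n:ℝ)^2 * ‖A - x‖ < m := by
      have ha : (n:ℝ)^2 * ‖A - x‖ ≤ ((n:ℝ)^2 + 1) * ‖A - x‖ := by
        nlinarith [norm_nonneg (A - x)]
      have h4 : ((n:ℝ)^2 + 1) * ‖A - x‖ < ((n:ℝ)^2 + 1) * (m / ((n:ℝ)^2 + 1)) :=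
        mul_lt_mul_of_pos_left hAx (by positivity)
      rw [mul_div_cancel₀] at h4
      · linarith
      · positivity
    rw [hsplit]
    linarith [abs_le.mp h2]
  have hvpos : (0:ℝ) < ‖v‖ := norm_pos_iff.mpr hv
  have hscale : v ⬝ᵥ A *ᵥ v = ‖v‖^2 * (w ⬝ᵥ A *ᵥ w) := by
    rw [hw_def, mulVec_smul, dotProduct_smul, smul_dotProduct, smul_smul, smul_eq_mul]
    field_simp
  rw [hscale]
  exact mul_pos (by positivity) h3

lemma f_eq_sum (f : MS n →L[ℝ] ℝ) (x : MS n) :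
    f x = ∑ i, ∑ j, x i j * f (Matrix.single i j 1) := by
  conv_lhs => rw [matrix_eq_sum_single x]
  rw [map_sum]
  congr 1; ext i
  rw [map_sum]
  congr 1; ext j
  have h : Matrix.single i j (x i j) = x i j • Matrix.single i j (1:ℝ) := by
    rw [smul_single, smul_eq_mul, mul_one]
  rw [h, _root_.map_smul, smul_eq_mul]

lemma pair_symm (f : MS n →L[ℝ] ℝ) (x : MS n) (hx : x.IsSymm) :
    ((((2:ℝ)⁻¹) • ((Matrix.of fun i j => f (Matrix.single i j 1)) +
      (Matrix.of fun i j => f (Matrix.single i j 1))ᵀ)) * x).trace = f x := by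
  set Y : MS n := Matrix.of fun i j => f (Matrix.single i j 1) with hY
  rw [Matrix.smul_mul, trace_smul, trace_mul_eq, f_eq_sum f x]
  have hxs : ∀ i j, x j i = x i j := fun i j => by
    conv_lhs => rw [← hx]
    rfl
  have expand : ∀ i j, (Y + Yᵀ) i j * x j i = Y i j * x i j + Y j i * x j i := by
    intro i j
    simp only [Matrix.add_apply, Matrix.transpose_apply]
    rw [hxs i j]
    ring
  calc (2:ℝ)⁻¹ • ∑ i, ∑ j, (Y + Yᵀ) i j * x j i
      = (2:ℝ)⁻¹ • ∑ i, ∑ j, (Y i j * x i j + Y j i * x j i) := by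
        congr 1; exact Finset.sum_congr rfl fun i _ => Finset.sum_congr rfl fun j _ => expand i j
    _ = (2:ℝ)⁻¹ • ((∑ i, ∑ j, Y i j * x i j) + ∑ i, ∑ j, Y j i * x j i) := by
        rw [← Finset.sum_add_distrib]
        congr 1; exact Finset.sum_congr rfl fun i _ => Finset.sum_add_distrib
    _ = ∑ i, ∑ j, Y i j * x i j := by
        rw [Finset.sum_comm (f := fun i j => Y j i * x j i)]
        simp [smul_eq_mul]
        ring
    _ = ∑ i, ∑ j, x i j * f (Matrix.single i j 1) := by
        refine Finset.sum_congr rfl fun i _ => Finset.sum_congr rfl fun j _ => ?_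
        rw [mul_comm]; rfl

end WeakFeasAux

open WeakFeasAux

/-- Weak feasibility of `(K_n, L, c)`: the affine set `L + c` (of symmetric matrices)
contains no positive definite matrix (i.e. misses the interior of `K_n` within `S_n`)
but contains a positive semidefinite matrix, if and only if
(i) some `x ∈ L + c` is positive semidefinite, and
(ii) there is a nonzero `y ∈ L^⊥ ∩ K_n` (orthogonality w.r.t. the trace inner product)
with `⟨y, c⟩ = 0`. -/
theorem stmt1 (n : ℕ) (L : Submodule ℝ (MS n)) (hL : ∀ x ∈ L, x.IsSymm)
    (c : MS n) (hc : c.IsSymm) :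
    ((¬ ∃ l ∈ L, (l + c).PosDef) ∧ (∃ l ∈ L, (l + c).PosSemidef)) ↔
      ((∃ l ∈ L, (l + c).PosSemidef) ∧
        ∃ y : MS n, y.PosSemidef ∧ y ≠ 0 ∧
          (∀ l ∈ L, (y * l).trace = 0) ∧ (y * c).trace = 0) := by
  constructor
  · rintro ⟨h1, l₀, hl₀, hpsd₀⟩
    refine ⟨⟨l₀, hl₀, hpsd₀⟩, ?_⟩
    set t : Set (MS n) := (fun z => z + c) '' (L : Set (MS n)) with ht_def
    have hconvt : Convex ℝ t := by
      have := (L.convex).translate c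
      have heq : ((fun x => c + x) '' (L : Set (MS n))) = t := by
        rw [ht_def]
        exact Set.image_congr' (fun x => add_comm c x)
      rwa [heq] at this
    have hdisj : Disjoint (posQF n) t := by
      rw [Set.disjoint_left]
      rintro a ha ⟨l, hl, rfl⟩
      refine h1 ⟨l, hl, Matrix.PosDef.of_dotProduct_mulVec_pos ?_ fun v hv => ?_⟩
      · exact (Matrix.conjTranspose_eq_transpose_of_trivial _).trans ((hL l hl).add hc)
      · rw [star_trivial]
        exact ha v hv
    obtain ⟨f, u, hfs, hft⟩ :=
      geometric_hahn_banach_open convex_posQF isOpen_posQF hconvt hdisj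
    set Y : MS n := Matrix.of fun i j => f (Matrix.single i j 1) with hY
    set z : MS n := (2:ℝ)⁻¹ • (Y + Yᵀ) with hz
    have hzs : z.IsSymm := by
      rw [hz, Matrix.IsSymm, Matrix.transpose_smul, Matrix.transpose_add,
        Matrix.transpose_transpose, add_comm]
    have hpair : ∀ x : MS n, x.IsSymm → (z * x).trace = f x := fun x hx =>
      pair_symm f x hx
    have hone : (1 : MS n) ∈ posQF n := by
      intro v hv
      rw [one_mulVec]
      exact dotProduct_self_pos' hv
    have hf1 : f 1 < u := hfs 1 hone
    have hfl : ∀ l ∈ L, f l = 0 := by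
      intro l hl
      by_contra hne
      have hmem : ((u - f c - 1) / f l) • l + c ∈ t :=
        ⟨((u - f c - 1) / f l) • l, L.smul_mem _ hl, rfl⟩
      have h := hft _ hmem
      rw [map_add, _root_.map_smul, smul_eq_mul, div_mul_cancel₀ _ hne] at h
      linarith
    have hfc_ge : u ≤ f c := by
      have hmem : c ∈ t := ⟨0, L.zero_mem, zero_add c⟩
      exact hft _ hmem
    have hfpsd : ∀ p : MS n, p.PosSemidef → f p ≤ 0 := by
      intro p hp
      by_contra hpos
      push_neg at hpos
      set t0 : ℝ := (u - f 1 + 1) / f p with ht0_def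
      have hmem : t0 • p + 1 ∈ posQF n := by
        intro v hv
        have hqp : 0 ≤ v ⬝ᵥ p *ᵥ v := by
          have := hp.dotProduct_mulVec_nonneg v
          rwa [star_trivial] at this
        have hexp : v ⬝ᵥ (t0 • p + 1) *ᵥ v = t0 * (v ⬝ᵥ p *ᵥ v) + v ⬝ᵥ v := by
          rw [add_mulVec, dotProduct_add, smul_mulVec, dotProduct_smul,
            one_mulVec, smul_eq_mul]
        rw [hexp]
        have hvv := dotProduct_self_pos' hv
        have ht0 : 0 < t0 := by
          rw [ht0_def]
          apply div_pos (by linarith) hpos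
        nlinarith
      have h := hfs _ hmem
      rw [map_add, _root_.map_smul, smul_eq_mul, ht0_def,
        div_mul_cancel₀ _ (ne_of_gt hpos)] at h
      linarith
    have hu0 : 0 ≤ u := by
      by_contra hu
      push_neg at hu
      have hf1neg : f 1 < 0 := lt_trans hf1 hu
      have hε : 0 < u / (2 * f 1) := div_pos_of_neg_of_neg hu (by linarith)
      have hmem : (u / (2 * f 1)) • (1 : MS n) ∈ posQF n := by
        intro v hv
        rw [smul_mulVec, dotProduct_smul, one_mulVec, smul_eq_mul]
        exact mul_pos hε (dotProduct_self_pos' hv)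
      have h := hfs _ hmem
      rw [_root_.map_smul, smul_eq_mul] at h
      have hne : f 1 ≠ 0 := ne_of_lt hf1neg
      have heq : u / (2 * f 1) * f 1 = u / 2 := by
        field_simp
      rw [heq] at h
      linarith
    have hfc_le : f c ≤ 0 := by
      have h := hfpsd _ hpsd₀
      rw [map_add, hfl l₀ hl₀, zero_add] at h
      exact h
    have hfc : f c = 0 := le_antisymm hfc_le (le_trans hu0 hfc_ge)
    have hu : u = 0 := le_antisymm (hfc ▸ hfc_ge) hu0
    refine ⟨-z, Matrix.PosSemidef.of_dotProduct_mulVec_nonneg ?_ ?_, ?_, ?_, ?_⟩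
    · -- Hermitian
      refine (Matrix.conjTranspose_eq_transpose_of_trivial _).trans ?_
      rw [Matrix.transpose_neg, hzs]
    · -- quadratic form nonneg
      intro v
      rw [star_trivial]
      have hvv_symm : (vecMulVec v v).IsSymm := by
        rw [Matrix.IsSymm]
        ext i j
        simp [vecMulVec_apply, mul_comm]
      have hvv_psd : (vecMulVec v v).PosSemidef := by
        apply Matrix.PosSemidef.of_dotProduct_mulVec_nonneg
        · exact (Matrix.conjTranspose_eq_transpose_of_trivial _).trans hvv_symm
        · intro w
          rw [star_trivial]
          have hexp : w ⬝ᵥ (vecMulVec v v) *ᵥ w = (v ⬝ᵥ w) * (v ⬝ᵥ w) := by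
            simp only [dotProduct, mulVec, vecMulVec_apply, Finset.mul_sum, Finset.sum_mul]
            rw [Finset.sum_comm]
            congr 1; ext i; congr 1; ext j; ring
          rw [hexp]
          exact mul_self_nonneg _
      have key : (-z * vecMulVec v v).trace = -(f (vecMulVec v v)) := by
        rw [Matrix.neg_mul, trace_neg, hpair _ hvv_symm]
      have := hfpsd _ hvv_psd
      have htr := trace_mul_vecMulVec (-z) v
      rw [key] at htr
      rw [← htr]
      linarith
    · -- nonzero
      intro hzero
      have hz0 : z = 0 := by
        have := congrArg Neg.neg hzero
        rwa [neg_neg, neg_zero] at this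
      have : f 1 = 0 := by
        rw [← hpair 1 (isSymm_one), hz0, Matrix.zero_mul, trace_zero]
      rw [this, hu] at hf1
      exact lt_irrefl _ hf1
    · -- orthogonal to L
      intro l hl
      rw [Matrix.neg_mul, trace_neg, hpair l (hL l hl), hfl l hl, neg_zero]
    · -- orthogonal to c
      rw [Matrix.neg_mul, trace_neg, hpair c hc, hfc, neg_zero]
  · rintro ⟨⟨l₀, hl₀, hpsd₀⟩, y, hy, hy0, hyl, hyc⟩
    refine ⟨?_, ⟨l₀, hl₀, hpsd₀⟩⟩
    rintro ⟨l, hl, hpd⟩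
    have htr : (y * (l + c)).trace = 0 := by
      rw [Matrix.mul_add, trace_add, hyl l hl, hyc, add_zero]
    exact pd_pairing_pos hpd hy hy0 htr
end
end

section
/- Let L ⊆ S_n be a linear subspace and c ∈ S_n. If (K_n,L,c) is weakly infeasible, i.e. (L+c) ∩ K_n = ∅ and dist(K_n, L+c) = 0, then there exists a nonzero matrix a ∈ K_n ∩ L. -/
open Matrix

attribute [local instance] Matrix.frobeniusNormedAddCommGroup

attribute [local instance] Matrix.frobeniusNormedSpace

noncomputable section

def PSD (n : ℕ) : Set (MS n) := {x | x.PosSemidef}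

def affSet {n : ℕ} (L : Submodule ℝ (MS n)) (c : MS n) : Set (MS n) :=
  {x | ∃ l ∈ L, x = l + c}

/-- `dist(C, D) = inf {‖x − y‖ : x ∈ C, y ∈ D}` in the Frobenius norm. -/
def sdist {m : ℕ} (C D : Set (MS m)) : ℝ := sInf (Set.image2 dist C D)

lemma psd_smul {n : ℕ} {r : ℝ} (hr : 0 ≤ r) {x : MS n} (h : x.PosSemidef) :
    (r • x).PosSemidef := by
  rw [posSemidef_iff_dotProduct_mulVec] at h ⊢
  refine ⟨?_, fun v => ?_⟩
  · unfold IsHermitian; rw [conjTranspose_smul, h.1.eq, star_trivial]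
  · simpa [smul_mulVec, dotProduct_smul] using mul_nonneg hr (h.2 v)

lemma isClosed_PSD (n : ℕ) : IsClosed (PSD n) := by
  have h1 : PSD n =
      (⋂ v : Fin n → ℝ, {x : MS n | 0 ≤ v ⬝ᵥ x *ᵥ v}) ∩ {x : MS n | xᴴ - x = 0} := by
    ext x
    simp only [PSD, Set.mem_inter_iff, Set.mem_iInter, Set.mem_setOf_eq, posSemidef_iff_dotProduct_mulVec,
      IsHermitian, sub_eq_zero]
    constructor
    · rintro ⟨h, h2⟩; exact ⟨fun v => by simpa using h2 v, h⟩
    · rintro ⟨h2, h⟩; exact ⟨h, fun v => by simpa using h2 v⟩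
  rw [h1]
  refine IsClosed.inter (isClosed_iInter fun v => ?_) ?_
  · have hlin : IsLinearMap ℝ fun x : MS n => v ⬝ᵥ x *ᵥ v := by
      constructor
      · intro a b; simp [add_mulVec, dotProduct_add]
      · intro r a
        rw [smul_mulVec, dotProduct_smul]
    have hcont : Continuous fun x : MS n => v ⬝ᵥ x *ᵥ v :=
      LinearMap.continuous_of_finiteDimensional hlin.mk'
    exact isClosed_le continuous_const hcont
  · have hlin : IsLinearMap ℝ fun x : MS n => xᴴ - x := by
      constructor
      · intro a b; simp only [conjTranspose_add]; abel
      · intro r a; rw [conjTranspose_smul, smul_sub]; simp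
    have hcont : Continuous fun x : MS n => xᴴ - x :=
      LinearMap.continuous_of_finiteDimensional hlin.mk'
    exact isClosed_eq hcont continuous_const

/-- If `(K_n, L, c)` is weakly infeasible, i.e. `(L+c) ∩ K_n = ∅` and
`dist(K_n, L+c) = 0`, then there is a nonzero matrix `a ∈ K_n ∩ L`. -/
theorem stmt4 (n : ℕ) (L : Submodule ℝ (MS n)) (hL : ∀ x ∈ L, x.IsSymm)
    (c : MS n) (hc : c.IsSymm)
    (hinf : ¬ ∃ x ∈ affSet L c, x.PosSemidef)
    (hdist : sdist (PSD n) (affSet L c) = 0) :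
    ∃ a : MS n, a ≠ 0 ∧ a.PosSemidef ∧ a ∈ L := by
  have hne : (Set.image2 dist (PSD n) (affSet L c)).Nonempty :=
    ⟨_, Set.mem_image2_of_mem (Matrix.PosSemidef.zero) ⟨0, L.zero_mem, (zero_add c).symm⟩⟩
  have hbdd : BddBelow (Set.image2 dist (PSD n) (affSet L c)) := by
    refine ⟨0, ?_⟩
    rintro r ⟨x, hx, y, hy, rfl⟩
    exact dist_nonneg
  have key : ∀ k : ℕ, ∃ x ∈ PSD n, ∃ l ∈ L, dist x (l + c) < 1/(k+1) := by
    intro k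
    have hpos : (0:ℝ) < 1/((k:ℝ)+1) := by positivity
    have hlt : sInf (Set.image2 dist (PSD n) (affSet L c)) < 1/((k:ℝ)+1) := by
      rw [show sInf (Set.image2 dist (PSD n) (affSet L c)) = sdist (PSD n) (affSet L c) from rfl,
        hdist]
      exact hpos
    obtain ⟨r, hr, hrlt⟩ := (csInf_lt_iff hbdd hne).mp hlt
    obtain ⟨x, hx, y, ⟨l, hl, rfl⟩, rfl⟩ := hr
    exact ⟨x, hx, l, hl, hrlt⟩
  choose x hx l hl hd using key
  have hLclosed : IsClosed (L : Set (MS n)) := Submodule.closed_of_finiteDimensional L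
  by_cases hb : ∃ C, ∀ k, ‖l k‖ ≤ C
  · -- bounded case: a limit point gives a feasible point, contradiction
    obtain ⟨C, hC⟩ := hb
    obtain ⟨a, -, φ, hφ, ha⟩ := (isCompact_closedBall (0:MS n) C).tendsto_subseq
      (x := l) (fun k => by simpa [Metric.mem_closedBall, dist_zero_right] using hC k)
    have haL : a ∈ L := hLclosed.mem_of_tendsto ha
      (Filter.Eventually.of_forall fun k => hl (φ k))
    have hdiff : Filter.Tendsto (fun k => x (φ k) - (l (φ k) + c)) Filter.atTop (nhds 0) := by
      refine tendsto_zero_iff_norm_tendsto_zero.2 ?_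
      refine squeeze_zero (fun k => norm_nonneg _) (fun k => ?_)
        tendsto_one_div_add_atTop_nhds_zero_nat
      have h1 : ‖x (φ k) - (l (φ k) + c)‖ < 1/((φ k : ℝ)+1) := by
        rw [← dist_eq_norm]; exact hd (φ k)
      have h2 : 1/((φ k : ℝ)+1) ≤ 1/((k:ℝ)+1) := by
        apply one_div_le_one_div_of_le (by positivity)
        have hkk : (k:ℝ) ≤ (φ k : ℝ) := Nat.cast_le.mpr hφ.le_apply
        linarith
      linarith
    have hxtend : Filter.Tendsto (fun k => x (φ k)) Filter.atTop (nhds (a + c)) := by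
      have := hdiff.add (ha.add (tendsto_const_nhds (x := c)))
      simpa using this
    have hac : (a + c).PosSemidef :=
      (isClosed_PSD n).mem_of_tendsto hxtend (Filter.Eventually.of_forall fun k => hx (φ k))
    exact absurd ⟨a + c, ⟨a, haL, rfl⟩, hac⟩ hinf
  · -- unbounded case: normalize to get a recession direction
    push_neg at hb
    choose K hK using hb
    set k : ℕ → ℕ := fun j => K ((j:ℝ)+1) with hkdef
    have hk : ∀ j : ℕ, (j:ℝ)+1 < ‖l (k j)‖ := fun j => hK ((j:ℝ)+1)
    have hkpos : ∀ j, (0:ℝ) < ‖l (k j)‖ := fun j => lt_of_le_of_lt (by positivity) (hk j)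
    set u : ℕ → MS n := fun j => ‖l (k j)‖⁻¹ • l (k j) with hudef
    have hu1 : ∀ j, ‖u j‖ = 1 := fun j => by
      rw [hudef]
      simp only [norm_smul, norm_inv, norm_norm]
      exact inv_mul_cancel₀ (hkpos j).ne'
    have huL : ∀ j, u j ∈ L := fun j => L.smul_mem _ (hl _)
    obtain ⟨a, -, φ, hφ, ha⟩ := (isCompact_closedBall (0:MS n) 1).tendsto_subseq
      (x := u) (fun j => by simp [Metric.mem_closedBall, dist_zero_right, hu1 j])
    have haL : a ∈ L := hLclosed.mem_of_tendsto ha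
      (Filter.Eventually.of_forall fun j => huL (φ j))
    have ha1 : ‖a‖ = 1 := by
      have h1 : Filter.Tendsto (fun j => ‖u (φ j)‖) Filter.atTop (nhds ‖a‖) := ha.norm
      have h2 : (fun j => ‖u (φ j)‖) = fun _ => (1:ℝ) := funext fun j => hu1 (φ j)
      rw [h2] at h1
      exact tendsto_nhds_unique h1 tendsto_const_nhds
    set w : ℕ → MS n := fun j => ‖l (k j)‖⁻¹ • x (k j) with hwdef
    have hwP : ∀ j, (w j).PosSemidef := fun j => psd_smul (by positivity) (hx _)
    have hwu : Filter.Tendsto (fun j => w j - u j) Filter.atTop (nhds 0) := by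
      refine tendsto_zero_iff_norm_tendsto_zero.2 ?_
      refine squeeze_zero (f := fun j => ‖w j - u j‖) (g := fun j => (1 + ‖c‖) * (1/((j:ℝ)+1)))
        (fun j => norm_nonneg _) (fun j => ?_) ?_
      · show ‖w j - u j‖ ≤ (1 + ‖c‖) * (1/((j:ℝ)+1))
        have heq : w j - u j
            = ‖l (k j)‖⁻¹ • (x (k j) - (l (k j) + c)) + ‖l (k j)‖⁻¹ • c := by
          rw [hwdef, hudef]
          simp only [smul_sub, smul_add]
          abel
        have hinvle : ‖l (k j)‖⁻¹ ≤ 1/((j:ℝ)+1) := by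
          rw [one_div]
          exact inv_anti₀ (by positivity) (hk j).le
        have hxl1 : ‖x (k j) - (l (k j) + c)‖ ≤ 1 := by
          have h1 : ‖x (k j) - (l (k j) + c)‖ < 1/((k j : ℝ)+1) := by
            rw [← dist_eq_norm]; exact hd (k j)
          have h2 : 1/((k j : ℝ)+1) ≤ 1 := by
            rw [div_le_one (by positivity)]; linarith [Nat.cast_nonneg (α := ℝ) (k j)]
          linarith
        calc ‖w j - u j‖
            ≤ ‖l (k j)‖⁻¹ * ‖x (k j) - (l (k j) + c)‖ + ‖l (k j)‖⁻¹ * ‖c‖ := by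
              rw [heq]
              refine (norm_add_le _ _).trans ?_
              simp [norm_smul, norm_inv, norm_norm, abs_of_nonneg (hkpos j).le]
          _ ≤ (1/((j:ℝ)+1)) * 1 + (1/((j:ℝ)+1)) * ‖c‖ := by
              exact add_le_add
                (mul_le_mul hinvle hxl1 (norm_nonneg _) (by positivity))
                (mul_le_mul_of_nonneg_right hinvle (norm_nonneg _))
          _ = (1 + ‖c‖) * (1/((j:ℝ)+1)) := by ring
      · have := tendsto_one_div_add_atTop_nhds_zero_nat.const_mul (1 + ‖c‖)
        simpa using this
    have hwtend : Filter.Tendsto (fun j => w (φ j)) Filter.atTop (nhds a) := by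
      have hsub : Filter.Tendsto (fun j => w (φ j) - u (φ j)) Filter.atTop (nhds 0) :=
        hwu.comp hφ.tendsto_atTop
      have := hsub.add ha
      simpa using this
    have haP : a.PosSemidef :=
      (isClosed_PSD n).mem_of_tendsto hwtend (Filter.Eventually.of_forall fun j => hwP (φ j))
    exact ⟨a, fun h0 => by simp [h0] at ha1, haP, haL⟩
end
end

section
/- Let L ⊆ S_n be a linear subspace, c ∈ S_n, and 0 < k ≤ n. Suppose L contains a matrix x of the block form x = [[A, 0], [0, 0]] where A is a k×k positive definite matrix. Then (L+c) contains a positive definite matrix if and only if π̄_k(L+c) = {π̄_k(y) : y ∈ L+c} contains a positive definite (n−k)×(n−k) matrix. (Strong feasibility of (K_n,L,c) is equivalent to strong feasibility of the subproblem π̄_k(K_n,L,c).) -/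
open Matrix

attribute [local instance] Matrix.frobeniusNormedAddCommGroup

noncomputable section

/-- The principal submatrix of `x` with rows and columns in `[a, b)`; for `a = k`,
`b = n` this is `π̄_k(x)`, the lower-right `(n−k)×(n−k)` principal submatrix, and
for `a = 0`, `b = j` it is `π_j(x)`, the upper-left `j×j` principal submatrix. -/
def blk (n a b : ℕ) (x : MS n) : Matrix (Fin (b - a)) (Fin (b - a)) ℝ :=
  fun i j => if h : a + i.1 < n ∧ a + j.1 < n then x ⟨a + i.1, h.1⟩ ⟨a + j.1, h.2⟩ else 0

/-- `x` has the block form whose lower-right `(n−a)×(n−a)` principal submatrix equals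
`[[Â, 0], [0, 0]]` with `Â` a positive definite `(b−a)×(b−a)` matrix sitting in rows
and columns `[a, b)`. -/
def staircase (n a b : ℕ) (x : MS n) : Prop :=
  (blk n a b x).PosDef ∧
    ∀ i j : Fin n, a ≤ i.1 → a ≤ j.1 → (b ≤ i.1 ∨ b ≤ j.1) → x i j = 0

namespace Stmt5Aux

/-- summing a function vanishing outside `[a, b)` over `Fin n` equals summing
the shifted function over `Fin (b - a)`. -/
lemma sum_shift {n : ℕ} (a b : ℕ) (hb : b ≤ n) (F : Fin n → ℝ)
    (hF : ∀ i : Fin n, i.1 < a ∨ b ≤ i.1 → F i = 0) :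
    ∑ i, F i = ∑ i : Fin (b - a), F ⟨a + i.1, by omega⟩ := by
  classical
  have hinj : ∀ x ∈ (Finset.univ : Finset (Fin (b - a))),
      ∀ y ∈ (Finset.univ : Finset (Fin (b - a))),
      (⟨a + x.1, by omega⟩ : Fin n) = ⟨a + y.1, by omega⟩ → x = y := by
    intro x _ y _ h
    simp only [Fin.mk.injEq] at h
    exact Fin.ext (by omega)
  have h1 : ∑ j ∈ Finset.univ.image (fun i : Fin (b - a) => (⟨a + i.1, by omega⟩ : Fin n)),
      F j = ∑ i : Fin (b - a), F ⟨a + i.1, by omega⟩ := Finset.sum_image hinj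
  have h2 : ∑ j ∈ Finset.univ.image (fun i : Fin (b - a) => (⟨a + i.1, by omega⟩ : Fin n)),
      F j = ∑ j, F j := by
    refine Finset.sum_subset (Finset.subset_univ _) ?_
    intro j _ hj
    refine hF j ?_
    by_contra hcon
    push_neg at hcon
    obtain ⟨h1', h2'⟩ := hcon
    refine hj (Finset.mem_image.mpr ⟨⟨j.1 - a, by omega⟩, Finset.mem_univ _, ?_⟩)
    exact Fin.ext (by simp; omega)
  rw [← h2, h1]

/-- restricting a quadratic form to a vector supported on `[a, b)`. -/
lemma quad_restrict {n : ℕ} (a b : ℕ) (hb : b ≤ n) (y : MS n) (v : Fin n → ℝ)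
    (hv : ∀ i : Fin n, i.1 < a ∨ b ≤ i.1 → v i = 0) :
    v ⬝ᵥ y *ᵥ v =
      (fun i : Fin (b - a) => v ⟨a + i.1, by omega⟩) ⬝ᵥ
        (blk n a b y) *ᵥ (fun i : Fin (b - a) => v ⟨a + i.1, by omega⟩) := by
  simp only [dotProduct, mulVec, blk]
  rw [sum_shift a b hb (fun i => v i * ∑ j, y i j * v j)
    (fun i hi => by simp [hv i hi])]
  refine Finset.sum_congr rfl fun i _ => ?_
  congr 1
  rw [sum_shift a b hb (fun j => y ⟨a + i.1, by omega⟩ j * v j)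
    (fun j hj => by simp [hv j hj])]
  refine Finset.sum_congr rfl fun j _ => ?_
  rw [dif_pos ⟨by omega, by omega⟩]

/-- quadratic form of a matrix supported on the top-left `k × k` block. -/
lemma quad_up {n : ℕ} (k : ℕ) (hkn : k ≤ n) (x : MS n)
    (hx0 : ∀ i j : Fin n, k ≤ i.1 ∨ k ≤ j.1 → x i j = 0) (v : Fin n → ℝ) :
    v ⬝ᵥ x *ᵥ v =
      (fun i : Fin (k - 0) => v ⟨i.1, by omega⟩) ⬝ᵥ
        (blk n 0 k x) *ᵥ (fun i : Fin (k - 0) => v ⟨i.1, by omega⟩) := by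
  classical
  set v' : Fin n → ℝ := fun i => if i.1 < k then v i else 0 with hv'
  have hsupp : ∀ i : Fin n, i.1 < 0 ∨ k ≤ i.1 → v' i = 0 := by
    intro i hi
    rcases hi with hi | hi
    · omega
    · simp [hv', Nat.not_lt.mpr hi]
  have h1 : v ⬝ᵥ x *ᵥ v = v' ⬝ᵥ x *ᵥ v' := by
    simp only [dotProduct, mulVec]
    refine Finset.sum_congr rfl fun i _ => ?_
    by_cases hik : i.1 < k
    · have hvv : v' i = v i := by simp [hv', hik]
      rw [hvv]
      congr 1
      refine Finset.sum_congr rfl fun j _ => ?_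
      by_cases hjk : j.1 < k
      · simp [hv', hjk]
      · rw [hx0 i j (Or.inr (Nat.not_lt.mp hjk)), zero_mul, zero_mul]
    · have hx' : ∀ j, x i j = 0 := fun j => hx0 i j (Or.inl (Nat.not_lt.mp hik))
      simp [hx']
  rw [h1, quad_restrict 0 k hkn x v' hsupp]
  have he : (fun i : Fin (k - 0) => v' ⟨0 + i.1, by omega⟩) =
      (fun i : Fin (k - 0) => v ⟨i.1, by omega⟩) := by
    funext i
    have hik : i.1 < k := by omega
    have : (⟨0 + i.1, by omega⟩ : Fin n) = ⟨i.1, by omega⟩ := Fin.ext (by simp)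
    rw [this]
    simp [hv', hik]
  rw [he]

/-- quadratic form of a vector supported on `[k, n)`. -/
lemma quad_low {n : ℕ} (k : ℕ) (hkn : k ≤ n) (y : MS n) (v : Fin n → ℝ)
    (hv : ∀ i : Fin n, i.1 < k → v i = 0) :
    v ⬝ᵥ y *ᵥ v =
      (fun i : Fin (n - k) => v ⟨k + i.1, by omega⟩) ⬝ᵥ
        (blk n k n y) *ᵥ (fun i : Fin (n - k) => v ⟨k + i.1, by omega⟩) :=
  quad_restrict k n le_rfl y v (fun i hi => by
    rcases hi with hi | hi
    · exact hv i hi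
    · exact absurd i.2 (Nat.not_lt.mpr hi))

lemma star_eq {m : ℕ} (w : Fin m → ℝ) : star w = w := rfl

end Stmt5Aux

open Stmt5Aux in
/-- If `L` contains a matrix `x = [[A, 0], [0, 0]]` with `A` a `k×k` positive definite
matrix (`0 < k ≤ n`), then `L + c` contains a positive definite matrix iff
`π̄_k(L+c)` contains a positive definite `(n−k)×(n−k)` matrix. -/
theorem stmt5 (n k : ℕ) (hk : 0 < k) (hkn : k ≤ n)
    (L : Submodule ℝ (MS n)) (hL : ∀ y ∈ L, y.IsSymm) (c : MS n) (hc : c.IsSymm)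
    (x : MS n) (hxL : x ∈ L) (hx : staircase n 0 k x) :
    (∃ l ∈ L, (l + c).PosDef) ↔ (∃ l ∈ L, (blk n k n (l + c)).PosDef) := by
  classical
  obtain ⟨hA, hx2⟩ := hx
  have hx0 : ∀ i j : Fin n, k ≤ i.1 ∨ k ≤ j.1 → x i j = 0 := fun i j h =>
    hx2 i j (Nat.zero_le _) (Nat.zero_le _) h
  constructor
  · -- forward: principal submatrix of a PD matrix is PD
    rintro ⟨l, hl, hPD⟩
    refine ⟨l, hl, Matrix.PosDef.of_dotProduct_mulVec_pos ?_ ?_⟩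
    · -- Hermitian
      have hy : (l + c).IsSymm := (hL l hl).add hc
      rw [Matrix.IsHermitian, conjTranspose_eq_transpose_of_trivial]
      ext i j
      simp only [transpose_apply, blk]
      rw [dif_pos ⟨by omega, by omega⟩, dif_pos ⟨by omega, by omega⟩]
      exact hy.apply _ _
    · intro w hw
      set v : Fin n → ℝ := fun i => if h : k ≤ i.1 then w ⟨i.1 - k, by omega⟩ else 0 with hvdef
      have hvlow : ∀ i : Fin n, i.1 < k → v i = 0 := by
        intro i hi; simp [hvdef, Nat.not_le.mpr hi]
      have hlowv : (fun i : Fin (n - k) => v ⟨k + i.1, by omega⟩) = w := by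
        funext i
        have h1 : k ≤ k + i.1 := Nat.le_add_right _ _
        simp only [hvdef, dif_pos h1]
        congr 1
        exact Fin.ext (by simp)
      have hvne : v ≠ 0 := by
        obtain ⟨j, hj⟩ := Function.ne_iff.mp hw
        intro hv0
        apply hj
        have := congrFun hv0 ⟨k + j.1, by omega⟩
        simp only [Pi.zero_apply] at this
        rw [← congrFun hlowv j] at hj ⊢
        simpa using this
      have hq := quad_low k hkn (l + c) v hvlow
      rw [hlowv] at hq
      have := hPD.dotProduct_mulVec_pos hvne
      rw [star_eq, hq] at this
      rw [star_eq]
      exact this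
  · -- backward
    rintro ⟨l, hl, hBlk⟩
    set y : MS n := l + c with hy
    set f : (Fin n → ℝ) → ℝ := fun v => v ⬝ᵥ y *ᵥ v with hf
    set g : (Fin n → ℝ) → ℝ := fun v => v ⬝ᵥ x *ᵥ v with hg
    -- g is nonnegative
    have hgnn : ∀ v, 0 ≤ g v := by
      intro v
      rw [hg]
      simp only
      rw [quad_up k hkn x hx0 v]
      by_cases hu : (fun i : Fin (k - 0) => v ⟨i.1, by omega⟩) = 0
      · rw [hu]; simp
      · have := hA.dotProduct_mulVec_pos hu
        rw [star_eq] at this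
        exact this.le
    -- if g v = 0 and v ≠ 0 then f v > 0
    have hgz : ∀ v, v ≠ 0 → g v = 0 → 0 < f v := by
      intro v hv hgv
      have hup : (fun i : Fin (k - 0) => v ⟨i.1, by omega⟩) = 0 := by
        by_contra hu
        have := hA.dotProduct_mulVec_pos hu
        rw [star_eq, ← quad_up k hkn x hx0 v] at this
        rw [hg] at hgv
        simp only at hgv
        rw [hgv] at this
        exact lt_irrefl _ this
      have hvlow : ∀ i : Fin n, i.1 < k → v i = 0 := by
        intro i hi
        have := congrFun hup ⟨i.1, by omega⟩
        simpa using this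
      have hwne : (fun i : Fin (n - k) => v ⟨k + i.1, by omega⟩) ≠ 0 := by
        obtain ⟨j, hj⟩ := Function.ne_iff.mp hv
        have hjk : k ≤ j.1 := by
          by_contra h
          exact hj (hvlow j (Nat.not_le.mp h))
        intro h0
        apply hj
        have := congrFun h0 ⟨j.1 - k, by omega⟩
        simp only [Pi.zero_apply] at this
        have heq : (⟨k + (j.1 - k), by omega⟩ : Fin n) = j := Fin.ext (by simp; omega)
        rw [heq] at this
        exact this
      have := hBlk.dotProduct_mulVec_pos hwne
      rw [star_eq, ← quad_low k hkn y v hvlow] at this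
      exact this
    -- continuity
    have hfc : Continuous f := by
      rw [hf]
      simp only [dotProduct, mulVec]
      exact continuous_finset_sum _ fun i _ =>
        (continuous_apply i).mul (continuous_finset_sum _ fun j _ =>
          continuous_const.mul (continuous_apply j))
    have hgc : Continuous g := by
      rw [hg]
      simp only [dotProduct, mulVec]
      exact continuous_finset_sum _ fun i _ =>
        (continuous_apply i).mul (continuous_finset_sum _ fun j _ =>
          continuous_const.mul (continuous_apply j))
    -- compactness argument on the unit sphere
    set S : Set (Fin n → ℝ) := Metric.sphere 0 1 with hS
    have hScompact : IsCompact S := isCompact_sphere 0 1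
    set U : ℕ → Set (Fin n → ℝ) := fun t => {v | 0 < f v + t * g v} with hU
    have hUopen : ∀ t : ℕ, IsOpen (U t) := fun t =>
      isOpen_lt continuous_const (hfc.add (continuous_const.mul hgc))
    have hcover : S ⊆ ⋃ t : ℕ, U t := by
      intro v hvS
      have hvne : v ≠ 0 := by
        intro h0
        rw [hS] at hvS
        rw [h0] at hvS
        simp at hvS
      by_cases hgv : 0 < g v
      · obtain ⟨t, ht⟩ := exists_nat_gt (-f v / g v)
        refine Set.mem_iUnion.mpr ⟨t, ?_⟩
        have h1 : -f v / g v * g v < t * g v := mul_lt_mul_of_pos_right ht hgv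
        rw [div_mul_cancel₀ _ (ne_of_gt hgv)] at h1
        simp only [hU, Set.mem_setOf_eq]
        linarith
      · have hgv0 : g v = 0 := le_antisymm (not_lt.mp hgv) (hgnn v)
        refine Set.mem_iUnion.mpr ⟨0, ?_⟩
        simp only [hU, Set.mem_setOf_eq, Nat.cast_zero, zero_mul, add_zero]
        exact hgz v hvne hgv0
    obtain ⟨s, hs⟩ := hScompact.elim_finite_subcover U hUopen hcover
    set T : ℕ := s.sup id with hT
    have hsphere : ∀ v, ‖v‖ = 1 → 0 < f v + T * g v := by
      intro v hv1
      have hvS : v ∈ S := by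
        rw [hS]
        simp [hv1]
      obtain ⟨t, htmem, hvt⟩ := Set.mem_iUnion₂.mp (hs hvS)
      have htT : t ≤ T := Finset.le_sup (f := id) htmem
      have htTr : (t : ℝ) ≤ T := Nat.cast_le.mpr htT
      have h1 : 0 < f v + t * g v := hvt
      nlinarith [hgnn v]
    -- conclude positivity of f v + T g v for all v ≠ 0
    have hpos : ∀ v : Fin n → ℝ, v ≠ 0 → 0 < f v + T * g v := by
      intro v hv
      set a : ℝ := ‖v‖⁻¹ with ha
      have hvn : 0 < ‖v‖ := norm_pos_iff.mpr hv
      have hapos : 0 < a := inv_pos.mpr hvn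
      set u : Fin n → ℝ := a • v with hu
      have hun : ‖u‖ = 1 := by
        rw [hu, norm_smul, ha, norm_inv, norm_norm, inv_mul_cancel₀ (ne_of_gt hvn)]
      have hfu : f u = a * (a * f v) := by
        rw [hf, hu]
        simp only
        rw [Matrix.mulVec_smul, smul_dotProduct, dotProduct_smul]
        simp [smul_eq_mul, mul_assoc]
      have hgu : g u = a * (a * g v) := by
        rw [hg, hu]
        simp only
        rw [Matrix.mulVec_smul, smul_dotProduct, dotProduct_smul]
        simp [smul_eq_mul, mul_assoc]
      have h1 := hsphere u hun
      rw [hfu, hgu] at h1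
      have h2 : 0 < a * a * (f v + T * g v) := by ring_nf; ring_nf at h1; linarith
      have h3 : 0 < a * a := mul_pos hapos hapos
      by_contra hcon
      push_neg at hcon
      nlinarith
    refine ⟨l + (T : ℝ) • x, Submodule.add_mem L hl (Submodule.smul_mem L _ hxL), Matrix.PosDef.of_dotProduct_mulVec_pos ?_ ?_⟩
    · -- Hermitian
      have hsymm : (l + (T : ℝ) • x + c).IsSymm := by
        have h1 : ((T : ℝ) • x).IsSymm := by
          unfold Matrix.IsSymm
          rw [transpose_smul, hL x hxL]
        exact ((hL l hl).add h1).add hc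
      rw [Matrix.IsHermitian, conjTranspose_eq_transpose_of_trivial]
      exact hsymm
    · intro v hv
      rw [star_eq]
      have hrw : l + (T : ℝ) • x + c = y + (T : ℝ) • x := by
        rw [hy]; abel
      rw [hrw, add_mulVec, dotProduct_add, smul_mulVec, dotProduct_smul]
      have := hpos v hv
      rw [hf, hg] at this
      simpa [smul_eq_mul] using this
end
end

section
/- Let L ⊆ S_n be a linear subspace, c ∈ S_n, and 0 < k ≤ n. Suppose L contains a matrix x of the block form x = [[A, 0], [0, 0]] where A is a k×k positive definite matrix. Then dist(K_n, L+c) > 0 if and only if dist(K_{n−k}, π̄_k(L+c)) > 0, where π̄_k(L+c) = {π̄_k(y) : y ∈ L+c}. (Strong infeasibility of (K_n,L,c) is equivalent to strong infeasibility of the subproblem π̄_k(K_n,L,c).) -/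
open Matrix

attribute [local instance] Matrix.frobeniusNormedAddCommGroup
attribute [local instance] Matrix.frobeniusNormedSpace

noncomputable section

lemma frob_eq {m l : Type*} [Fintype m] [Fintype l] (M : Matrix m l ℝ) :
    ‖M‖ = Real.sqrt (∑ i, ∑ j, (M i j)^2) := by
  rw [Matrix.frobenius_norm_def, Real.sqrt_eq_rpow]
  congr 1
  congr! 2 with i _ j _
  rw [show (2:ℝ) = ((2:ℕ):ℝ) by norm_num, Real.rpow_natCast, Real.norm_eq_abs, sq_abs]

lemma herm_add_norm_smul_one {m : Type*} [Fintype m] [DecidableEq m]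
    {N : Matrix m m ℝ} (hN : N.IsHermitian) : (N + ‖N‖ • 1).PosSemidef := by
  refine Matrix.posSemidef_iff_dotProduct_mulVec.mpr ⟨?_, ?_⟩
  · show _ = _
    rw [conjTranspose_add, hN.eq, conjTranspose_smul, conjTranspose_one, star_trivial]
  · intro v
    have hv : star v = v := by ext i; simp
    rw [hv, add_mulVec, dotProduct_add, smul_mulVec, one_mulVec, dotProduct_smul]
    have key : -(v ⬝ᵥ N *ᵥ v) ≤ ‖N‖ * (v ⬝ᵥ v) := by
      have h1 : v ⬝ᵥ N *ᵥ v = ∑ p : m × m, N p.1 p.2 * (v p.1 * v p.2) := by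
        rw [Fintype.sum_prod_type]
        simp only [dotProduct, mulVec, dotProduct, Finset.mul_sum]
        exact Finset.sum_congr rfl fun i _ => Finset.sum_congr rfl fun j _ => by ring
      have h2 : -(v ⬝ᵥ N *ᵥ v) = ∑ p : m × m, (-N p.1 p.2) * (v p.1 * v p.2) := by
        rw [h1, ← Finset.sum_neg_distrib]
        exact Finset.sum_congr rfl fun p _ => by ring
      have cs := Real.sum_mul_le_sqrt_mul_sqrt Finset.univ
        (fun p : m × m => -N p.1 p.2) (fun p : m × m => v p.1 * v p.2)
      rw [h2]
      refine cs.trans_eq ?_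
      have e1 : Real.sqrt (∑ p : m × m, (-N p.1 p.2)^2) = ‖N‖ := by
        rw [frob_eq]
        congr 1
        rw [Fintype.sum_prod_type]
        exact Finset.sum_congr rfl fun i _ => Finset.sum_congr rfl fun j _ => by ring
      have e2 : Real.sqrt (∑ p : m × m, (v p.1 * v p.2)^2) = v ⬝ᵥ v := by
        have : ∑ p : m × m, (v p.1 * v p.2)^2 = (∑ i, v i ^ 2) * (∑ i, v i ^ 2) := by
          rw [Fintype.sum_prod_type, Finset.sum_mul_sum]
          exact Finset.sum_congr rfl fun i _ => Finset.sum_congr rfl fun j _ => by ring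
        rw [this, Real.sqrt_mul_self (Finset.sum_nonneg fun i _ => sq_nonneg _)]
        simp [dotProduct, sq]
      rw [e1, e2]
    have hvv : 0 ≤ v ⬝ᵥ v := Finset.sum_nonneg fun i _ => mul_self_nonneg _
    rw [smul_eq_mul]
    linarith

lemma exists_shift {m : Type*} [Fintype m] [DecidableEq m]
    {A M : Matrix m m ℝ} (hA : A.PosDef) (hM : M.IsHermitian) :
    ∃ t : ℝ, (M + t • A).PosSemidef := by
  obtain ⟨S, hS, hSS⟩ : ∃ S : Matrix m m ℝ, S.PosSemidef ∧ S * S = A := by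
    open scoped MatrixOrder in
    exact ⟨CFC.sqrt A, Matrix.nonneg_iff_posSemidef.mp (CFC.sqrt_nonneg A),
      CFC.sqrt_mul_sqrt_self A (Matrix.nonneg_iff_posSemidef.mpr hA.posSemidef)⟩
  have hdet : IsUnit S.det := by
    have : S.det * S.det = A.det := by rw [← det_mul, hSS]
    have hApos := hA.det_pos
    refine (Ne.isUnit ?_)
    intro h; rw [h, mul_zero] at this; exact hApos.ne' this.symm
  have hinv1 : S⁻¹ * S = 1 := nonsing_inv_mul S hdet
  have hinv2 : S * S⁻¹ = 1 := mul_nonsing_inv S hdet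
  have hSH : Sᴴ = S := hS.isHermitian
  have hSinvH : S⁻¹ᴴ = S⁻¹ := by rw [conjTranspose_nonsing_inv, hSH]
  set N := S⁻¹ * M * S⁻¹ with hNdef
  have hNH : N.IsHermitian := by
    show _ = _
    rw [hNdef, conjTranspose_mul, conjTranspose_mul, hSinvH, hM.eq, Matrix.mul_assoc]
  refine ⟨‖N‖, ?_⟩
  have key : M + ‖N‖ • A = S * (N + ‖N‖ • 1) * Sᴴ := by
    rw [hSH, Matrix.mul_add, Matrix.add_mul, hNdef]
    congr 1
    · symm
      calc S * (S⁻¹ * M * S⁻¹) * S = S * S⁻¹ * M * (S⁻¹ * S) := by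
            simp only [Matrix.mul_assoc]
          _ = M := by rw [hinv1, hinv2, Matrix.one_mul, Matrix.mul_one]
    · rw [Matrix.mul_smul, Matrix.smul_mul, Matrix.mul_one, hSS]
  rw [key]
  exact (herm_add_norm_smul_one hNH).mul_mul_conjTranspose_same S

lemma frob_submatrix_le {m l m' l' : Type*} [Fintype m] [Fintype l] [Fintype m'] [Fintype l']
    (M : Matrix m l ℝ) (e₁ : m' → m) (e₂ : l' → l)
    (h₁ : Function.Injective e₁) (h₂ : Function.Injective e₂) :
    ‖M.submatrix e₁ e₂‖ ≤ ‖M‖ := by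
  classical
  rw [frob_eq, frob_eq]
  apply Real.sqrt_le_sqrt
  simp only [Matrix.submatrix_apply]
  rw [← Fintype.sum_prod_type', ← Fintype.sum_prod_type']
  have hinj : Function.Injective (fun p : m' × l' => (e₁ p.1, e₂ p.2)) := by
    intro p q h
    simp only [Prod.mk.injEq] at h
    exact Prod.ext (h₁ h.1) (h₂ h.2)
  calc ∑ p : m' × l', (M (e₁ p.1) (e₂ p.2))^2
      = ∑ q ∈ Finset.univ.image (fun p : m' × l' => (e₁ p.1, e₂ p.2)), (M q.1 q.2)^2 := by
        rw [Finset.sum_image (fun p _ q _ h => hinj h)]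
    _ ≤ ∑ q : m × l, (M q.1 q.2)^2 :=
        Finset.sum_le_sum_of_subset_of_nonneg (Finset.subset_univ _)
          (fun q _ _ => sq_nonneg _)

lemma frob_submatrix_equiv {m l m' l' : Type*} [Fintype m] [Fintype l] [Fintype m'] [Fintype l']
    (M : Matrix m l ℝ) (e₁ : m' ≃ m) (e₂ : l' ≃ l) :
    ‖M.submatrix e₁ e₂‖ = ‖M‖ := by
  rw [frob_eq, frob_eq]
  congr 1
  simp only [Matrix.submatrix_apply]
  rw [← Equiv.sum_comp e₁ (fun i => ∑ j, (M i j)^2)]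
  exact Finset.sum_congr rfl fun i _ =>
    Equiv.sum_comp e₂ (fun j => (M (e₁ i) j)^2)

lemma frob_fromBlocks_zero {m l : Type*} [Fintype m] [Fintype l] [DecidableEq m] [DecidableEq l]
    (D : Matrix l l ℝ) :
    ‖(fromBlocks (0 : Matrix m m ℝ) (0 : Matrix m l ℝ) (0 : Matrix l m ℝ) D :
        Matrix (m ⊕ l) (m ⊕ l) ℝ)‖ = ‖D‖ := by
  rw [frob_eq, frob_eq]
  congr 1
  rw [Fintype.sum_sum_type]
  simp only [Fintype.sum_sum_type, fromBlocks_apply₁₁, fromBlocks_apply₁₂,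
    fromBlocks_apply₂₁, fromBlocks_apply₂₂, Matrix.zero_apply]
  simp

lemma posDef_smul {m : Type*} [Fintype m] {M : Matrix m m ℝ} (hM : M.PosDef)
    {δ : ℝ} (hδ : 0 < δ) : (δ • M).PosDef := by
  refine Matrix.posDef_iff_dotProduct_mulVec.mpr ⟨?_, fun v hv => ?_⟩
  · show _ = _
    rw [conjTranspose_smul, hM.1.eq, star_trivial]
  · rw [smul_mulVec, dotProduct_smul, smul_eq_mul]
    exact mul_pos hδ (hM.dotProduct_mulVec_pos hv)

lemma isHermitian_of_isSymm {m : Type*} {M : Matrix m m ℝ} (h : M.IsSymm) :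
    M.IsHermitian := by
  show _ = _
  ext i j
  rw [conjTranspose_apply, star_trivial, h.apply]

lemma sdist_bddBelow {m : ℕ} (C D : Set (MS m)) : BddBelow (Set.image2 dist C D) := by
  refine ⟨0, ?_⟩
  rintro p ⟨a, _, b, _, rfl⟩
  exact dist_nonneg

lemma sdist_nonneg' {m : ℕ} (C D : Set (MS m)) : 0 ≤ sdist C D := by
  apply Real.sInf_nonneg
  rintro p ⟨a, _, b, _, rfl⟩
  exact dist_nonneg

lemma sdist_le {m : ℕ} {C D : Set (MS m)} {a b : MS m} (ha : a ∈ C) (hb : b ∈ D) :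
    sdist C D ≤ dist a b :=
  csInf_le (sdist_bddBelow C D) (Set.mem_image2_of_mem ha hb)

/-- If `L` contains a matrix `x = [[A, 0], [0, 0]]` with `A` a `k×k` positive definite
matrix (`0 < k ≤ n`), then `dist(K_n, L+c) > 0` iff `dist(K_{n−k}, π̄_k(L+c)) > 0`. -/
theorem stmt6 (n k : ℕ) (hk : 0 < k) (hkn : k ≤ n)
    (L : Submodule ℝ (MS n)) (hL : ∀ y ∈ L, y.IsSymm) (c : MS n) (hc : c.IsSymm)
    (x : MS n) (hxL : x ∈ L) (hx : staircase n 0 k x) :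
    sdist (PSD n) (affSet L c) > 0 ↔
      sdist (PSD (n - k)) (blk n k n '' affSet L c) > 0 := by
  classical
  set e₁ : Fin k → Fin n := fun i => ⟨i.1, lt_of_lt_of_le i.2 hkn⟩ with he₁
  set e₂ : Fin (n - k) → Fin n := fun i => ⟨k + i.1, by have := i.2; omega⟩ with he₂
  have he₂inj : Function.Injective e₂ := by
    intro i j h
    have : k + i.1 = k + j.1 := congrArg Fin.val h
    exact Fin.ext (by omega)
  have blkBR : ∀ y : MS n, blk n k n y = y.submatrix e₂ e₂ := by
    intro y
    funext i j
    have h : k + i.1 < n ∧ k + j.1 < n := ⟨by have := i.2; omega, by have := j.2; omega⟩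
    simp only [blk, dif_pos h]
    rfl
  have blkTL : ∀ y : MS n, (blk n 0 k y : Matrix (Fin k) (Fin k) ℝ) = y.submatrix e₁ e₁ := by
    intro y
    funext i j
    have h : 0 + i.1 < n ∧ 0 + j.1 < n :=
      ⟨by have := i.2; omega, by have := j.2; omega⟩
    simp only [blk, dif_pos h]
    simp only [Matrix.submatrix_apply]
    congr 1 <;> exact Fin.ext (by simp [he₁])
  have blk_sub : ∀ a b : MS n, blk n k n a - blk n k n b = blk n k n (a - b) := by
    intro a b
    rw [blkBR, blkBR, blkBR]
    funext i j
    simp [Matrix.submatrix_apply]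
  have blk_dist : ∀ a b : MS n, dist (blk n k n a) (blk n k n b) ≤ dist a b := by
    intro a b
    rw [dist_eq_norm, dist_eq_norm, blk_sub, blkBR]
    exact frob_submatrix_le _ e₂ e₂ he₂inj he₂inj
  have blk_psd : ∀ a ∈ PSD n, blk n k n a ∈ PSD (n - k) := by
    intro a ha
    show (blk n k n a).PosSemidef
    rw [blkBR]
    exact Matrix.PosSemidef.submatrix ha e₂
  have haffne : (affSet L c).Nonempty := ⟨c, 0, L.zero_mem, (zero_add c).symm⟩
  have himgne : (blk n k n '' affSet L c).Nonempty := haffne.image _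
  have hPSDn : (PSD n).Nonempty := ⟨0, Matrix.PosSemidef.zero⟩
  have hPSDnk : (PSD (n - k)).Nonempty := ⟨0, Matrix.PosSemidef.zero⟩
  have hge : sdist (PSD (n - k)) (blk n k n '' affSet L c) ≤ sdist (PSD n) (affSet L c) := by
    refine le_csInf (hPSDn.image2 haffne) ?_
    rintro p ⟨a, ha, b, hb, rfl⟩
    exact (sdist_le (blk_psd a ha) (Set.mem_image_of_mem _ hb)).trans (blk_dist a b)
  constructor
  · intro h
    by_contra hns
    push_neg at hns
    have hz0 : sdist (PSD (n - k)) (blk n k n '' affSet L c) = 0 :=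
      le_antisymm hns (sdist_nonneg' _ _)
    have hmain : ∀ ε : ℝ, 0 < ε → ∃ a ∈ PSD n, ∃ b ∈ affSet L c, dist a b < ε := by
      intro ε hε
      have hlt : sdist (PSD (n - k)) (blk n k n '' affSet L c) < ε / 2 := by
        rw [hz0]; positivity
      obtain ⟨q, hq, hqlt⟩ := exists_lt_of_csInf_lt (hPSDnk.image2 himgne) hlt
      obtain ⟨z, hzPSD, w, hw, rfl⟩ := hq
      obtain ⟨y, hy, rfl⟩ := hw
      have hzPSD' : z.PosSemidef := hzPSD
      have hysymm : y.IsSymm := by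
        obtain ⟨l, hlL, rfl⟩ := hy
        exact (hL l hlL).add hc
      -- the positive definite top-left block of x
      have hApd : (x.submatrix e₁ e₁).PosDef := by
        rw [← blkTL]
        exact hx.1
      -- perturbation size
      set δ : ℝ := ε / (2 * (‖(1 : Matrix (Fin (n - k)) (Fin (n - k)) ℝ)‖ + 1)) with hδdef
      have hone : (0:ℝ) ≤ ‖(1 : Matrix (Fin (n - k)) (Fin (n - k)) ℝ)‖ := norm_nonneg _
      have hδ : 0 < δ := by
        rw [hδdef]; positivity
      set z' : Matrix (Fin (n - k)) (Fin (n - k)) ℝ := z + δ • 1 with hz'def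
      have hz' : z'.PosDef := Matrix.PosDef.posSemidef_add hzPSD' (posDef_smul Matrix.PosDef.one hδ)
      letI := hz'.isUnit.invertible
      set B : Matrix (Fin k) (Fin (n - k)) ℝ := y.submatrix e₁ e₂ with hBdef
      have hyH : (y.submatrix e₁ e₁).IsHermitian := by
        show _ = _
        ext i j
        simp only [conjTranspose_apply, Matrix.submatrix_apply, star_trivial]
        exact hysymm.apply _ _
      have hM₀H : (y.submatrix e₁ e₁ - B * z'⁻¹ * Bᴴ).IsHermitian := by
        refine hyH.sub ?_
        show _ = _
        rw [conjTranspose_mul, conjTranspose_mul, conjTranspose_conjTranspose,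
          (hz'.inv.1 : z'⁻¹ᴴ = z'⁻¹), Matrix.mul_assoc]
      obtain ⟨t, ht⟩ := exists_shift hApd hM₀H
      set TL : Matrix (Fin k) (Fin k) ℝ := y.submatrix e₁ e₁ + t • (x.submatrix e₁ e₁)
        with hTLdef
      have hW₀ : (fromBlocks TL B Bᴴ z').PosSemidef := by
        rw [Matrix.PosDef.fromBlocks₂₂ TL B hz']
        have : TL - B * z'⁻¹ * Bᴴ
            = y.submatrix e₁ e₁ - B * z'⁻¹ * Bᴴ + t • (x.submatrix e₁ e₁) := by
          rw [hTLdef]; abel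
        rw [this]
        exact ht
      set f : (Fin k ⊕ Fin (n - k)) ≃ Fin n :=
        finSumFinEquiv.trans (finCongr (Nat.add_sub_cancel' hkn)) with hfdef
      have hf1 : ∀ i : Fin k, f (Sum.inl i) = e₁ i := by
        intro i
        apply Fin.ext
        simp [hfdef, he₁]
      have hf2 : ∀ j : Fin (n - k), f (Sum.inr j) = e₂ j := by
        intro j
        apply Fin.ext
        simp [hfdef, he₂]
      set W : MS n := (fromBlocks TL B Bᴴ z').submatrix
        (fun i => f.symm i) (fun i => f.symm i) with hWdef
      have hWpsd : W ∈ PSD n := hW₀.submatrix _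
      set b : MS n := y + t • x with hbdef
      have hbaff : b ∈ affSet L c := by
        obtain ⟨l, hlL, rfl⟩ := hy
        exact ⟨l + t • x, add_mem hlL (Submodule.smul_mem _ t hxL), by rw [hbdef]; abel⟩
      have hx2 : ∀ (i : Fin k) (j : Fin (n - k)), x (e₁ i) (e₂ j) = 0 := fun i j =>
        hx.2 (e₁ i) (e₂ j) (Nat.zero_le _) (Nat.zero_le _) (Or.inr (by simp [he₂]))
      have hx2' : ∀ (i : Fin (n - k)) (j : Fin k), x (e₂ i) (e₁ j) = 0 := fun i j =>
        hx.2 (e₂ i) (e₁ j) (Nat.zero_le _) (Nat.zero_le _) (Or.inl (by simp [he₂]))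
      have hx2'' : ∀ (i j : Fin (n - k)), x (e₂ i) (e₂ j) = 0 := fun i j =>
        hx.2 (e₂ i) (e₂ j) (Nat.zero_le _) (Nat.zero_le _) (Or.inl (by simp [he₂]))
      have hdiff : (W - b).submatrix f f
          = fromBlocks 0 0 0 (z' - blk n k n y) := by
        funext p q
        have hWval : ∀ p' q', (W - b).submatrix f f p' q'
            = fromBlocks TL B Bᴴ z' p' q' - b (f p') (f q') := by
          intro p' q'
          simp only [Matrix.submatrix_apply, Matrix.sub_apply, hWdef,
            Equiv.symm_apply_apply]
        rw [hWval]
        rcases p with i | i <;> rcases q with j | j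
        · simp only [fromBlocks_apply₁₁, hf1, hbdef, hTLdef, Matrix.add_apply,
            Matrix.smul_apply, Matrix.submatrix_apply, smul_eq_mul, Matrix.zero_apply]
          ring
        · simp only [fromBlocks_apply₁₂, hf1, hf2, hbdef, hBdef, Matrix.add_apply,
            Matrix.smul_apply, Matrix.submatrix_apply, smul_eq_mul, Matrix.zero_apply,
            hx2 i j]
          ring
        · simp only [fromBlocks_apply₂₁, hf1, hf2, hbdef, hBdef, Matrix.add_apply,
            Matrix.smul_apply, Matrix.conjTranspose_apply, Matrix.submatrix_apply,
            smul_eq_mul, Matrix.zero_apply, star_trivial, hx2' i j]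
          rw [hysymm.apply (e₂ i) (e₁ j)]
          ring
        · simp only [fromBlocks_apply₂₂, hf2, hbdef, Matrix.add_apply,
            Matrix.smul_apply, smul_eq_mul, hx2'' i j, blkBR, Matrix.sub_apply,
            Matrix.submatrix_apply]
          ring
      have hnorm : ‖W - b‖ = ‖z' - blk n k n y‖ := by
        rw [← frob_submatrix_equiv (W - b) f f, hdiff, frob_fromBlocks_zero]
      have hsplit : z' - blk n k n y = (z - blk n k n y) + δ • 1 := by
        rw [hz'def]; abel
      have hδone : ‖δ • (1 : Matrix (Fin (n - k)) (Fin (n - k)) ℝ)‖ < ε / 2 := by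
        rw [norm_smul, Real.norm_eq_abs, abs_of_pos hδ]
        have hkey : δ * (‖(1 : Matrix (Fin (n - k)) (Fin (n - k)) ℝ)‖ + 1) = ε / 2 := by
          rw [hδdef]
          field_simp
        nlinarith
      have hfinal : dist W b < ε := by
        rw [dist_eq_norm, hnorm, hsplit]
        calc ‖(z - blk n k n y) + δ • (1 : Matrix (Fin (n - k)) (Fin (n - k)) ℝ)‖
            ≤ ‖z - blk n k n y‖ + ‖δ • (1 : Matrix (Fin (n - k)) (Fin (n - k)) ℝ)‖ :=
              norm_add_le _ _
          _ < ε / 2 + ε / 2 := by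
              have : ‖z - blk n k n y‖ < ε / 2 := by
                rw [← dist_eq_norm]; exact hqlt
              linarith [hδone]
          _ = ε := by ring
      exact ⟨W, hWpsd, b, hbaff, hfinal⟩
    obtain ⟨a, ha, b, hb, hab⟩ := hmain (sdist (PSD n) (affSet L c)) h
    exact absurd (sdist_le ha hb) (not_le.mpr hab)
  · intro h
    exact lt_of_lt_of_le h hge
end
end

section
/- Let 0 < k ≤ n, let y ∈ S_n be a symmetric matrix whose lower-right (n−k)×(n−k) principal submatrix is positive definite, and let A be a k×k positive definite matrix. Set x = [[A, 0], [0, 0]] ∈ S_n. Then there exists α₀ > 0 such that for all α ≥ α₀ the matrix y + α x is positive definite. -/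
open Matrix

attribute [local instance] Matrix.frobeniusNormedAddCommGroup

noncomputable section

namespace Stmt8Aux

variable {m p : ℕ}

lemma dot_expand (M : Matrix (Fin m) (Fin m) ℝ) (v w : Fin m → ℝ) :
    v ⬝ᵥ M *ᵥ w = ∑ i, ∑ j, v i * M i j * w j := by
  simp [dotProduct, Matrix.mulVec, Finset.mul_sum, mul_assoc]

lemma dot_self_nonneg (v : Fin m → ℝ) : 0 ≤ v ⬝ᵥ v :=
  Finset.sum_nonneg fun i _ => mul_self_nonneg _

lemma dot_self_pos {v : Fin m → ℝ} (hv : v ≠ 0) : 0 < v ⬝ᵥ v := by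
  obtain ⟨i, hi⟩ := Function.ne_iff.mp hv
  exact Finset.sum_pos' (fun j _ => mul_self_nonneg _)
    ⟨i, Finset.mem_univ _, mul_self_pos.mpr hi⟩

lemma abs_entry_le_sqrt (v : Fin m → ℝ) (i : Fin m) : |v i| ≤ Real.sqrt (v ⬝ᵥ v) := by
  rw [← Real.sqrt_sq_eq_abs]
  refine Real.sqrt_le_sqrt ?_
  rw [pow_two]
  exact Finset.single_le_sum (f := fun j => v j * v j)
    (fun j _ => mul_self_nonneg _) (Finset.mem_univ i)

lemma quad_abs_le (M : Matrix (Fin m) (Fin m) ℝ) (v w : Fin m → ℝ) :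
    |v ⬝ᵥ M *ᵥ w| ≤ (∑ i, ∑ j, |M i j|) * (Real.sqrt (v ⬝ᵥ v) * Real.sqrt (w ⬝ᵥ w)) := by
  rw [dot_expand]
  calc |∑ i, ∑ j, v i * M i j * w j| ≤ ∑ i, |∑ j, v i * M i j * w j| :=
        Finset.abs_sum_le_sum_abs _ _
    _ ≤ ∑ i, ∑ j, |v i * M i j * w j| :=
        Finset.sum_le_sum fun i _ => Finset.abs_sum_le_sum_abs _ _
    _ ≤ ∑ i, ∑ j, |M i j| * (Real.sqrt (v ⬝ᵥ v) * Real.sqrt (w ⬝ᵥ w)) := by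
        refine Finset.sum_le_sum fun i _ => Finset.sum_le_sum fun j _ => ?_
        rw [abs_mul, abs_mul]
        have h1 := abs_entry_le_sqrt v i
        have h2 := abs_entry_le_sqrt w j
        nlinarith [mul_le_mul_of_nonneg_left
          (mul_le_mul h1 h2 (abs_nonneg _) (Real.sqrt_nonneg _)) (abs_nonneg (M i j)), abs_nonneg (v i), abs_nonneg (w j), abs_nonneg (M i j),
          Real.sqrt_nonneg (v ⬝ᵥ v), Real.sqrt_nonneg (w ⬝ᵥ w)]
    _ = (∑ i, ∑ j, |M i j|) * (Real.sqrt (v ⬝ᵥ v) * Real.sqrt (w ⬝ᵥ w)) := by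
        rw [Finset.sum_mul]
        exact Finset.sum_congr rfl fun i _ => (Finset.sum_mul _ _ _).symm

lemma cauchy_dot (a b : Fin m → ℝ) : (a ⬝ᵥ b) ^ 2 ≤ (a ⬝ᵥ a) * (b ⬝ᵥ b) := by
  simpa [dotProduct, pow_two] using
    Finset.sum_mul_sq_le_sq_mul_sq Finset.univ a b

lemma symm_shift (P : Matrix (Fin m) (Fin m) ℝ) (hP : Pᵀ = P) (a b : Fin m → ℝ) :
    (P *ᵥ a) ⬝ᵥ b = a ⬝ᵥ (P *ᵥ b) := by
  rw [dotProduct_mulVec, ← mulVec_transpose, hP]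

lemma herm_transpose {M : Matrix (Fin m) (Fin m) ℝ} (h : M.IsHermitian) : Mᵀ = M := by
  ext i j
  have := h.apply i j
  simpa using this

open scoped MatrixOrder in
lemma posdef_lower (M : Matrix (Fin m) (Fin m) ℝ) (hM : M.PosDef) :
    ∃ c : ℝ, 0 < c ∧ ∀ v : Fin m → ℝ, c * (v ⬝ᵥ v) ≤ v ⬝ᵥ M *ᵥ v := by
  have hdet : IsUnit M.det := isUnit_iff_ne_zero.mpr hM.det_pos.ne'
  have hMM : M * M⁻¹ = 1 := mul_nonsing_inv M hdet
  set S := CFC.sqrt M with hSdef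
  have hS : S * S = M := CFC.sqrt_mul_sqrt_self M hM.posSemidef.nonneg
  have hSsym : Sᵀ = S := herm_transpose (CFC.sqrt_nonneg M).posSemidef.1
  set C₂ := ∑ i, ∑ j, |M⁻¹ i j| with hC2
  have hC2nn : 0 ≤ C₂ :=
    Finset.sum_nonneg fun i _ => Finset.sum_nonneg fun j _ => abs_nonneg _
  refine ⟨1 / (C₂ + 1), by positivity, fun v => ?_⟩
  rcases eq_or_ne v 0 with rfl | hv
  · simp
  have hvv : 0 < v ⬝ᵥ v := dot_self_pos hv
  -- Cauchy–Schwarz in the M-inner product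
  have key : ∀ z : Fin m → ℝ, M *ᵥ z = S *ᵥ (S *ᵥ z) := fun z => by
    rw [mulVec_mulVec, hS]
  have h1 : v ⬝ᵥ v = (S *ᵥ v) ⬝ᵥ (S *ᵥ (M⁻¹ *ᵥ v)) := by
    calc v ⬝ᵥ v = v ⬝ᵥ ((M * M⁻¹) *ᵥ v) := by rw [hMM, one_mulVec]
      _ = v ⬝ᵥ (M *ᵥ (M⁻¹ *ᵥ v)) := by rw [mulVec_mulVec]
      _ = v ⬝ᵥ (S *ᵥ (S *ᵥ (M⁻¹ *ᵥ v))) := by rw [key]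
      _ = (S *ᵥ v) ⬝ᵥ (S *ᵥ (M⁻¹ *ᵥ v)) := (symm_shift S hSsym _ _).symm
  have h2 : ∀ z : Fin m → ℝ, (S *ᵥ z) ⬝ᵥ (S *ᵥ z) = z ⬝ᵥ M *ᵥ z := fun z => by
    rw [symm_shift S hSsym, mulVec_mulVec, hS]
  have h3 : (S *ᵥ (M⁻¹ *ᵥ v)) ⬝ᵥ (S *ᵥ (M⁻¹ *ᵥ v)) = v ⬝ᵥ (M⁻¹ *ᵥ v) := by
    rw [h2, mulVec_mulVec, hMM, one_mulVec, dotProduct_comm]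
  have hcs : (v ⬝ᵥ v) ^ 2 ≤ (v ⬝ᵥ M *ᵥ v) * (v ⬝ᵥ (M⁻¹ *ᵥ v)) := by
    have := cauchy_dot (S *ᵥ v) (S *ᵥ (M⁻¹ *ᵥ v))
    rw [h2, h3] at this
    rw [h1]
    exact this
  have hub : v ⬝ᵥ (M⁻¹ *ᵥ v) ≤ C₂ * (v ⬝ᵥ v) := by
    have := quad_abs_le M⁻¹ v v
    rw [Real.mul_self_sqrt (dot_self_nonneg v)] at this
    exact (le_abs_self _).trans this
  have hMv : 0 ≤ v ⬝ᵥ M *ᵥ v := by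
    have := hM.posSemidef.dotProduct_mulVec_nonneg v
    simpa using this
  rw [div_mul_eq_mul_div, one_mul, div_le_iff₀ (by positivity)]
  nlinarith [mul_le_mul_of_nonneg_left hub hMv, mul_nonneg hMv hvv.le]

lemma sum_range_eq {mm nn : ℕ} (e : Fin mm → Fin nn) (he : Function.Injective e)
    (f : Fin nn → ℝ) (hf : ∀ i, (∀ j, e j ≠ i) → f i = 0) :
    ∑ i, f i = ∑ j, f (e j) := by
  classical
  have h := Finset.sum_subset
    (Finset.subset_univ ((Finset.univ : Finset (Fin mm)).map ⟨e, he⟩))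
    (fun i _ hi => hf i fun j hj => hi (Finset.mem_map.mpr ⟨j, Finset.mem_univ _, hj⟩))
  rw [Finset.sum_map] at h
  exact h.symm

lemma blk_apply {n a b : ℕ} (x : MS n) (i j : Fin (b - a)) {i' j' : Fin n}
    (hi : i'.1 = a + i.1) (hj : j'.1 = a + j.1) : blk n a b x i j = x i' j' := by
  have hi2 : a + i.1 < n := hi ▸ i'.2
  have hj2 : a + j.1 < n := hj ▸ j'.2
  have e1 : i' = ⟨a + i.1, hi2⟩ := Fin.ext hi
  have e2 : j' = ⟨a + j.1, hj2⟩ := Fin.ext hj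
  rw [e1, e2]
  exact dif_pos ⟨hi2, hj2⟩

end Stmt8Aux

set_option maxHeartbeats 1000000 in
open Stmt8Aux in
/-- Let `0 < k ≤ n`, let `y` be a symmetric `n×n` matrix whose lower-right
`(n−k)×(n−k)` principal submatrix is positive definite, and let
`x = [[A, 0], [0, 0]]` with `A` a `k×k` positive definite matrix. Then there
exists `α₀ > 0` such that `y + α x` is positive definite for all `α ≥ α₀`. -/
theorem stmt8 (n k : ℕ) (hk : 0 < k) (hkn : k ≤ n)
    (y : MS n) (hy : y.IsSymm) (hyblk : (blk n k n y).PosDef)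
    (x : MS n) (hxA : (blk n 0 k x).PosDef)
    (hx0 : ∀ i j : Fin n, (k ≤ i.1 ∨ k ≤ j.1) → x i j = 0) :
    ∃ α₀ : ℝ, 0 < α₀ ∧ ∀ α : ℝ, α₀ ≤ α → (y + α • x).PosDef := by
  classical
  obtain ⟨cA, hcA, hA⟩ := posdef_lower _ hxA
  obtain ⟨cD, hcD, hD⟩ := posdef_lower _ hyblk
  set C : ℝ := ∑ i, ∑ j, |y i j| with hCdef
  have hCnn : 0 ≤ C :=
    Finset.sum_nonneg fun i _ => Finset.sum_nonneg fun j _ => abs_nonneg _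
  -- x is symmetric
  have hxsym : xᵀ = x := by
    ext i j
    rw [transpose_apply]
    by_cases hik : i.1 < k
    · by_cases hjk : j.1 < k
      · have h1 : blk n 0 k x ⟨i.1, by omega⟩ ⟨j.1, by omega⟩ = x i j :=
          blk_apply x _ _ (by simp) (by simp)
        have h2 : blk n 0 k x ⟨j.1, by omega⟩ ⟨i.1, by omega⟩ = x j i :=
          blk_apply x _ _ (by simp) (by simp)
        have h3 := hxA.1.apply (⟨i.1, by omega⟩ : Fin (k - 0)) ⟨j.1, by omega⟩
        rw [star_trivial] at h3
        rw [← h1, ← h2, h3]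
      · rw [hx0 i j (Or.inr (le_of_not_gt hjk)), hx0 j i (Or.inl (le_of_not_gt hjk))]
    · rw [hx0 i j (Or.inl (le_of_not_gt hik)), hx0 j i (Or.inr (le_of_not_gt hik))]
  refine ⟨(C * cD + 2 * C ^ 2 + cD) / (cA * cD), by positivity, fun α hα => ?_⟩
  have hα0 : 0 < α := lt_of_lt_of_le (by positivity) hα
  have hαkey : C * cD + 2 * C ^ 2 + cD ≤ α * (cA * cD) := by
    rw [div_le_iff₀ (by positivity)] at hα
    linarith
  have hherm : ∀ M : MS n, Mᵀ = M → Mᴴ = M := fun M hM => by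
    ext i j
    rw [conjTranspose_apply, star_trivial]
    exact congrFun (congrFun hM i) j
  refine PosDef.of_dotProduct_mulVec_pos ?_ ?_
  · apply hherm
    rw [transpose_add, transpose_smul, hy, hxsym]
  intro v hv
  have hstar : star v = v := by simp
  rw [hstar]
  -- split v into the low part u and the high part w
  set u : Fin n → ℝ := fun i => if i.1 < k then v i else 0 with hu
  set w : Fin n → ℝ := fun i => if i.1 < k then 0 else v i with hw
  have hvuw : v = u + w := funext fun i => by
    by_cases h : i.1 < k <;> simp [hu, hw, h]
  set eA : Fin (k - 0) → Fin n := fun j => ⟨j.1, by have := j.2; omega⟩ with heA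
  set eD : Fin (n - k) → Fin n := fun j => ⟨k + j.1, by have := j.2; omega⟩ with heD
  have heAinj : Function.Injective eA := fun a b hab => Fin.ext (by
    have := congrArg Fin.val hab; simpa [heA] using this)
  have heDinj : Function.Injective eD := fun a b hab => Fin.ext (by
    have := congrArg Fin.val hab; simp [heD] at this; omega)
  set u' : Fin (k - 0) → ℝ := fun j => v (eA j) with hu'
  set w' : Fin (n - k) → ℝ := fun j => v (eD j) with hw'
  have hueA : ∀ j, u (eA j) = u' j := fun j => by
    have hjk : j.1 < k := by have := j.2; omega
    have : (eA j).1 < k := by simpa [heA] using hjk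
    simp [hu, hu', this]
  have hweD : ∀ j, w (eD j) = w' j := fun j => by
    have : ¬ (eD j).1 < k := by simp [heD]
    simp [hw, hw', this]
  have hu_zero : ∀ i : Fin n, (∀ j, eA j ≠ i) → u i = 0 := by
    intro i hi
    by_cases h : i.1 < k
    · exact absurd (Fin.ext (by simp [heA]) : eA ⟨i.1, by omega⟩ = i) (hi _)
    · simp [hu, h]
  have hw_zero : ∀ i : Fin n, (∀ j, eD j ≠ i) → w i = 0 := by
    intro i hi
    by_cases h : i.1 < k
    · simp [hw, h]
    · exact absurd (Fin.ext (by simp [heD]; omega) : eD ⟨i.1 - k, by omega⟩ = i) (hi _)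
  -- u ⬝ᵥ u = u' ⬝ᵥ u' and w ⬝ᵥ w = w' ⬝ᵥ w'
  have hfu : ∀ i : Fin n, (∀ j, eA j ≠ i) → u i * u i = 0 := fun i hi => by
    rw [hu_zero i hi]; ring
  have huu : u ⬝ᵥ u = u' ⬝ᵥ u' := by
    unfold dotProduct
    rw [sum_range_eq eA heAinj (fun i => u i * u i) hfu]
    exact Finset.sum_congr rfl fun j _ => by rw [hueA]
  have hfw : ∀ i : Fin n, (∀ j, eD j ≠ i) → w i * w i = 0 := fun i hi => by
    rw [hw_zero i hi]; ring
  have hww : w ⬝ᵥ w = w' ⬝ᵥ w' := by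
    unfold dotProduct
    rw [sum_range_eq eD heDinj (fun i => w i * w i) hfw]
    exact Finset.sum_congr rfl fun j _ => by rw [hweD]
  -- quadratic form of x
  have hx_vv : v ⬝ᵥ x *ᵥ v = u' ⬝ᵥ (blk n 0 k x) *ᵥ u' := by
    rw [dot_expand, dot_expand]
    have hfo : ∀ i : Fin n, (∀ j', eA j' ≠ i) → (∑ j, v i * x i j * v j) = 0 := by
      intro i hi
      refine Finset.sum_eq_zero fun j _ => ?_
      have hik : k ≤ i.1 := by
        by_contra h
        push_neg at h
        exact hi ⟨i.1, by omega⟩ (Fin.ext (by simp [heA]))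
      rw [hx0 i j (Or.inl hik)]; ring
    rw [sum_range_eq eA heAinj (fun i => ∑ j, v i * x i j * v j) hfo]
    refine Finset.sum_congr rfl fun i' _ => ?_
    have hfi : ∀ j : Fin n, (∀ j', eA j' ≠ j) → v (eA i') * x (eA i') j * v j = 0 := by
      intro j hj
      have hjk : k ≤ j.1 := by
        by_contra h
        push_neg at h
        exact hj ⟨j.1, by omega⟩ (Fin.ext (by simp [heA]))
      rw [hx0 (eA i') j (Or.inr hjk)]; ring
    rw [sum_range_eq eA heAinj (fun j => v (eA i') * x (eA i') j * v j) hfi]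
    refine Finset.sum_congr rfl fun j' _ => ?_
    rw [blk_apply x i' j' (i' := eA i') (j' := eA j') (by simp [heA]) (by simp [heA])]
    try simp [hu']
  -- quadratic form of y on the high part
  have hy_ww : w ⬝ᵥ y *ᵥ w = w' ⬝ᵥ (blk n k n y) *ᵥ w' := by
    rw [dot_expand, dot_expand]
    have hgo : ∀ i : Fin n, (∀ j', eD j' ≠ i) → (∑ j, w i * y i j * w j) = 0 := by
      intro i hi
      exact Finset.sum_eq_zero fun j _ => by rw [hw_zero i hi]; ring
    rw [sum_range_eq eD heDinj (fun i => ∑ j, w i * y i j * w j) hgo]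
    refine Finset.sum_congr rfl fun i' _ => ?_
    have hgi : ∀ j : Fin n, (∀ j', eD j' ≠ j) → w (eD i') * y (eD i') j * w j = 0 :=
      fun j hj => by rw [hw_zero j hj]; ring
    rw [sum_range_eq eD heDinj (fun j => w (eD i') * y (eD i') j * w j) hgi]
    refine Finset.sum_congr rfl fun j' _ => ?_
    rw [blk_apply y i' j' (i' := eD i') (j' := eD j') (by simp [heD]) (by simp [heD])]
    try rw [hweD i', hweD j']
  -- expansion of the quadratic form
  have hQ : v ⬝ᵥ (y + α • x) *ᵥ v =
      (u ⬝ᵥ y *ᵥ u + u ⬝ᵥ y *ᵥ w + w ⬝ᵥ y *ᵥ u + w ⬝ᵥ y *ᵥ w) + α * (v ⬝ᵥ x *ᵥ v) := by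
    rw [add_mulVec, dotProduct_add, smul_mulVec, dotProduct_smul, smul_eq_mul]
    congr 1
    rw [hvuw, mulVec_add, dotProduct_add, add_dotProduct, add_dotProduct]
    ring
  set S1 : ℝ := Real.sqrt (u ⬝ᵥ u) with hS1def
  set T1 : ℝ := Real.sqrt (w ⬝ᵥ w) with hT1def
  have hS1 : u ⬝ᵥ u = S1 * S1 := (Real.mul_self_sqrt (dot_self_nonneg u)).symm
  have hT1 : w ⬝ᵥ w = T1 * T1 := (Real.mul_self_sqrt (dot_self_nonneg w)).symm
  have hS1nn : 0 ≤ S1 := Real.sqrt_nonneg _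
  have hT1nn : 0 ≤ T1 := Real.sqrt_nonneg _
  -- bounds
  have hb2 : -(C * (S1 * S1)) ≤ u ⬝ᵥ y *ᵥ u := by
    have := quad_abs_le y u u
    rw [← hS1def] at this
    rw [← hCdef] at this
    exact (abs_le.mp this).1
  have hb3 : -(C * (S1 * T1)) ≤ u ⬝ᵥ y *ᵥ w := by
    have := quad_abs_le y u w
    rw [← hS1def, ← hT1def] at this
    rw [← hCdef] at this
    exact (abs_le.mp this).1
  have hb4 : -(C * (S1 * T1)) ≤ w ⬝ᵥ y *ᵥ u := by
    have := quad_abs_le y w u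
    rw [← hS1def, ← hT1def] at this
    rw [← hCdef] at this
    rw [mul_comm T1 S1] at this
    exact (abs_le.mp this).1
  have hb1 : cD * (T1 * T1) ≤ w ⬝ᵥ y *ᵥ w := by
    rw [hy_ww, ← hT1, hww]
    exact hD w'
  have hb5 : cA * (S1 * S1) ≤ v ⬝ᵥ x *ᵥ v := by
    rw [hx_vv, ← hS1, huu]
    exact hA u'
  have hb5' : 0 ≤ v ⬝ᵥ x *ᵥ v := le_trans (by nlinarith) hb5
  have hαx : α * (cA * (S1 * S1)) ≤ α * (v ⬝ᵥ x *ᵥ v) :=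
    mul_le_mul_of_nonneg_left hb5 hα0.le
  -- one of the two parts is nonzero
  have hpos : 0 < S1 * S1 ∨ 0 < T1 * T1 := by
    obtain ⟨i, hi⟩ := Function.ne_iff.mp hv
    by_cases h : i.1 < k
    · left
      rw [← hS1]
      refine dot_self_pos fun h0 => hi ?_
      have := congrFun h0 i
      simpa [hu, h] using this
    · right
      rw [← hT1]
      refine dot_self_pos fun h0 => hi ?_
      have := congrFun h0 i
      simpa [hw, h] using this
  rw [hQ]
  rcases hpos with hp | hp
  · nlinarith [sq_nonneg (cD * T1 - C * S1), mul_pos hcD hp, sq_nonneg (C * S1)]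
  · nlinarith [sq_nonneg (cD * T1 - C * S1), sq_nonneg (cD * T1 - 2 * C * S1),
      mul_pos (mul_pos hcD hcD) hp, mul_pos hcD hp, sq_nonneg (C * S1),
      mul_le_mul_of_nonneg_right hαkey (mul_nonneg hS1nn hS1nn),
      mul_le_mul_of_nonneg_left hb2 hcD.le, mul_le_mul_of_nonneg_left hb3 hcD.le,
      mul_le_mul_of_nonneg_left hb4 hcD.le, mul_le_mul_of_nonneg_left hb1 hcD.le,
      mul_le_mul_of_nonneg_left hαx hcD.le,
      mul_nonneg (mul_nonneg hCnn hS1nn) hS1nn, hb5', hα0, hcD, hCnn, hS1nn, hT1nn]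
end
end

section
/- Let L ⊆ S_n be a linear subspace and c ∈ S_n. Let k₁,…,k_m be positive integers with N_i = k₁+⋯+k_i, N_m ≤ n (set N₀ = 0), and suppose A₁,…,A_m ∈ L have the staircase shape: for each i, the lower-right (n−N_{i−1})×(n−N_{i−1}) principal submatrix of A_i equals [[Â_i, 0],[0, 0]] for some k_i×k_i positive definite matrix Â_i. Suppose moreover that the partition is maximal, i.e. the only positive semidefinite matrix in π̄_{N_m}(L) is the zero matrix. Then (K_n,L,c) is in weak status (weakly feasible or weakly infeasible) if and only if the subproblem (K_{n−N_m}, π̄_{N_m}(L), π̄_{N_m}(c)) is weakly feasible. -/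
open Matrix

attribute [local instance] Matrix.frobeniusNormedAddCommGroup
attribute [local instance] Matrix.frobeniusNormedSpace

noncomputable section

/-- The problem with affine feasible set `D` is in weak status: weakly feasible
(`D` contains a positive semidefinite but no positive definite matrix), or weakly
infeasible (`D ∩ K_m = ∅` and `dist(K_m, D) = 0`). -/
def weakStatus {m : ℕ} (D : Set (MS m)) : Prop :=
  ((∃ u ∈ D, u.PosSemidef) ∧ ¬ ∃ u ∈ D, u.PosDef) ∨
    ((¬ ∃ u ∈ D, u.PosSemidef) ∧ sdist (PSD m) D = 0)

/-- The problem with affine feasible set `D` is weakly feasible: `D` contains a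
positive semidefinite but no positive definite matrix. -/
def weaklyFeasible {m : ℕ} (D : Set (MS m)) : Prop :=
  (∃ u ∈ D, u.PosSemidef) ∧ ¬ ∃ u ∈ D, u.PosDef

namespace St11

/-- square of the euclidean norm of a vector -/
def ns {p : ℕ} (v : Fin p → ℝ) : ℝ := ∑ i, v i ^ 2

lemma ns_nonneg {p : ℕ} (v : Fin p → ℝ) : 0 ≤ ns v :=
  Finset.sum_nonneg fun i _ => sq_nonneg _

lemma eq_zero_of_ns_eq_zero {p : ℕ} {v : Fin p → ℝ} (h : ns v = 0) : v = 0 := by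
  funext i
  have h2 := (Finset.sum_eq_zero_iff_of_nonneg (fun i _ => sq_nonneg (v i))).1 h i
    (Finset.mem_univ i)
  exact pow_eq_zero_iff two_ne_zero |>.1 h2

lemma ns_pos {p : ℕ} {v : Fin p → ℝ} (h : v ≠ 0) : 0 < ns v := by
  rcases lt_or_eq_of_le (ns_nonneg v) with h1 | h1
  · exact h1
  · exact absurd (eq_zero_of_ns_eq_zero h1.symm) h

lemma abs_le_sqrt_ns {p : ℕ} (v : Fin p → ℝ) (i : Fin p) : |v i| ≤ Real.sqrt (ns v) := by
  rw [← Real.sqrt_sq_eq_abs]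
  exact Real.sqrt_le_sqrt (Finset.single_le_sum (fun i _ => sq_nonneg (v i)) (Finset.mem_univ i))

lemma dmv {p : ℕ} (M : MS p) (v w : Fin p → ℝ) :
    v ⬝ᵥ M *ᵥ w = ∑ i, ∑ j, v i * (M i j * w j) := by
  simp [dotProduct, mulVec, Finset.mul_sum]

/-- generic lower-right submatrix with explicit output size -/
def sub' (p q d : ℕ) (M : MS p) : MS q :=
  fun r s => if h : d + r.1 < p ∧ d + s.1 < p then M ⟨d + r.1, h.1⟩ ⟨d + s.1, h.2⟩ else 0

lemma blk_eq_sub' (n j b : ℕ) (x : MS n) : blk n j b x = sub' n (b - j) j x := rfl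

lemma sub'_apply {p q d : ℕ} (h : q + d ≤ p) (M : MS p) (r s : Fin q) :
    sub' p q d M r s =
      M ⟨d + r.1, by have := r.2; omega⟩ ⟨d + s.1, by have := s.2; omega⟩ := by
  have h1 : d + r.1 < p := by have := r.2; omega
  have h2 : d + s.1 < p := by have := s.2; omega
  simp [sub', h1, h2]

lemma sub'_add {p q d : ℕ} (M M' : MS p) :
    sub' p q d (M + M') = sub' p q d M + sub' p q d M' := by
  funext r s
  by_cases h : d + r.1 < p ∧ d + s.1 < p <;> simp [sub', h]

lemma sub'_smul {p q d : ℕ} (t : ℝ) (M : MS p) :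
    sub' p q d (t • M) = t • sub' p q d M := by
  funext r s
  by_cases h : d + r.1 < p ∧ d + s.1 < p <;> simp [sub', h]

lemma sub'_sub {p q d : ℕ} (M M' : MS p) :
    sub' p q d (M - M') = sub' p q d M - sub' p q d M' := by
  funext r s
  by_cases h : d + r.1 < p ∧ d + s.1 < p <;> simp [sub', h]

def sub'L (p q d : ℕ) : MS p →ₗ[ℝ] MS q where
  toFun := sub' p q d
  map_add' := sub'_add
  map_smul' := sub'_smul

lemma sub'_isSymm {p q d : ℕ} {M : MS p} (hM : M.IsSymm) : (sub' p q d M).IsSymm := by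
  funext s r
  have hM' : ∀ i j, M i j = M j i := fun i j => (congrFun (congrFun hM j) i : _)
  by_cases h : d + r.1 < p ∧ d + s.1 < p
  · simp only [Matrix.transpose_apply, sub', dif_pos h, dif_pos (And.intro h.2 h.1)]
    exact hM' _ _
  · have h' : ¬ (d + s.1 < p ∧ d + r.1 < p) := fun hc => h ⟨hc.2, hc.1⟩
    simp [Matrix.transpose_apply, sub', h, h']

lemma isHermitian_of_isSymm {p : ℕ} {M : MS p} (hM : M.IsSymm) : M.IsHermitian := by
  have hM' : ∀ i j, M i j = M j i := fun i j => (congrFun (congrFun hM j) i : _)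
  funext i j
  simp [Matrix.conjTranspose_apply, hM' i j]

lemma isSymm_of_isHermitian {p : ℕ} {M : MS p} (hM : M.IsHermitian) : M.IsSymm := by
  funext i j
  have := congrFun (congrFun hM i) j
  simpa [Matrix.conjTranspose_apply, Matrix.transpose_apply] using this

lemma sub'_sub' {n j j' : ℕ} (hj : j ≤ j') (hj' : j' ≤ n) (x : MS n) :
    sub' (n - j) (n - j') (j' - j) (sub' n (n - j) j x) = sub' n (n - j') j' x := by
  funext r s
  have hr := r.2; have hs := s.2
  have h1 : (n - j') + (j' - j) ≤ n - j := by omega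
  have h2 : (n - j) + j ≤ n := by omega
  have h3 : (n - j') + j' ≤ n := by omega
  rw [sub'_apply h1, sub'_apply h2, sub'_apply h3]
  congr 1 <;> exact Fin.ext (by simp; omega)

variable {p q d k : ℕ}

lemma shift_lt (h : q + d ≤ p) (r : Fin q) : d + r.1 < p := by have := r.2; omega

lemma sum_shift (h : q + d = p) (F : Fin p → ℝ) (hF : ∀ i : Fin p, i.1 < d → F i = 0) :
    ∑ i, F i = ∑ r : Fin q, F ⟨d + r.1, shift_lt h.le r⟩ := by
  classical
  set g : Fin q → Fin p := fun r => ⟨d + r.1, shift_lt h.le r⟩ with hg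
  have step1 : ∑ i, F i = ∑ i ∈ Finset.univ.image g, F i := by
    refine (Finset.sum_subset (Finset.subset_univ _) ?_).symm
    intro i _ hi
    refine hF i ?_
    by_contra hd
    push_neg at hd
    exact hi (Finset.mem_image.2 ⟨⟨i.1 - d, by have := i.2; omega⟩, Finset.mem_univ _,
      Fin.ext (by simp [hg]; omega)⟩)
  rw [step1, Finset.sum_image]
  intro a _ b _ hab
  exact Fin.ext (by have := congrArg Fin.val hab; simp [hg] at this; omega)

lemma sum_trunc (h : k ≤ p) (F : Fin p → ℝ) (hF : ∀ i : Fin p, k ≤ i.1 → F i = 0) :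
    ∑ i, F i = ∑ r : Fin k, F (Fin.castLE h r) := by
  classical
  have step1 : ∑ i, F i = ∑ i ∈ Finset.univ.image (Fin.castLE h), F i := by
    refine (Finset.sum_subset (Finset.subset_univ _) ?_).symm
    intro i _ hi
    refine hF i ?_
    by_contra hd
    push_neg at hd
    exact hi (Finset.mem_image.2 ⟨⟨i.1, hd⟩, Finset.mem_univ _, Fin.ext (by simp)⟩)
  rw [step1, Finset.sum_image (fun a _ b _ hab => Fin.castLE_injective h hab)]

def extV (p d : ℕ) {q : ℕ} (v : Fin q → ℝ) : Fin p → ℝ :=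
  fun i => if h : d ≤ i.1 ∧ i.1 - d < q then v ⟨i.1 - d, h.2⟩ else 0

def restrV (q d : ℕ) {p : ℕ} (u : Fin p → ℝ) : Fin q → ℝ :=
  fun r => if h : d + r.1 < p then u ⟨d + r.1, h⟩ else 0

variable {p q d k : ℕ}

lemma extV_apply_shift (h : q + d ≤ p) (v : Fin q → ℝ) (r : Fin q) :
    extV p d v ⟨d + r.1, shift_lt h r⟩ = v r := by
  have h1 : d ≤ d + r.1 ∧ (d + r.1) - d < q := ⟨by omega, by have := r.2; omega⟩
  rw [extV, dif_pos h1]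
  congr 1
  exact Fin.ext (by simp)

lemma extV_supported (v : Fin q → ℝ) {i : Fin p} (hi : i.1 < d) : extV p d v i = 0 := by
  rw [extV, dif_neg]; omega

lemma restrV_extV (h : q + d = p) (v : Fin q → ℝ) : restrV q d (extV p d v) = v := by
  funext r
  rw [restrV, dif_pos (shift_lt h.le r)]
  exact extV_apply_shift h.le v r

lemma extV_restrV (h : q + d = p) {u : Fin p → ℝ} (hu : ∀ i : Fin p, i.1 < d → u i = 0) :
    extV p d (restrV q d u) = u := by
  funext i
  by_cases hd : d ≤ i.1 ∧ i.1 - d < q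
  · rw [extV, dif_pos hd, restrV, dif_pos (by have := i.2; omega : d + (i.1 - d) < p)]
    congr 1
    exact Fin.ext (by simp; omega)
  · rw [extV, dif_neg hd]
    have : i.1 < d := by have := i.2; omega
    exact (hu i this).symm

lemma extV_eq_zero {v : Fin q → ℝ} (h : q + d = p) (hv : extV p d v = 0) : v = 0 := by
  have := restrV_extV (p := p) h v
  rw [hv] at this
  rw [← this]
  funext r
  by_cases hr : d + r.1 < p <;> simp [restrV, hr]

lemma ns_extV (h : q + d = p) (v : Fin q → ℝ) : ns (extV p d v) = ns v := by
  rw [ns, sum_shift h _ (fun i hi => by rw [extV_supported v hi]; ring)]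
  refine Finset.sum_congr rfl fun r _ => ?_
  rw [extV_apply_shift h.le]

lemma dot_extV (h : q + d = p) (M : MS p) (v w : Fin q → ℝ) :
    extV p d v ⬝ᵥ M *ᵥ extV p d w = v ⬝ᵥ sub' p q d M *ᵥ w := by
  rw [dmv, dmv]
  rw [sum_shift h _ (fun i hi => by
    rw [extV_supported v hi]
    exact Finset.sum_eq_zero fun j _ => by ring)]
  refine Finset.sum_congr rfl fun r _ => ?_
  rw [sum_shift h _ (fun i hi => by rw [extV_supported w hi]; ring)]
  refine Finset.sum_congr rfl fun s _ => ?_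
  rw [extV_apply_shift h.le, extV_apply_shift h.le, sub'_apply (le_of_eq h)]

lemma star_eq_self (v : Fin q → ℝ) : star v = v := funext fun i => by simp

lemma sub'_posSemidef_iff (h : q + d = p) {M : MS p} (hM : M.IsSymm) :
    (sub' p q d M).PosSemidef ↔
      ∀ u : Fin p → ℝ, (∀ i : Fin p, i.1 < d → u i = 0) → 0 ≤ u ⬝ᵥ M *ᵥ u := by
  constructor
  · intro hp u hu
    have h2 := hp.dotProduct_mulVec_nonneg (restrV q d u)
    rw [star_eq_self, ← dot_extV h, extV_restrV h hu] at h2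
    exact h2
  · intro H
    refine Matrix.PosSemidef.of_dotProduct_mulVec_nonneg (isHermitian_of_isSymm (sub'_isSymm hM)) fun v => ?_
    rw [star_eq_self, ← dot_extV h]
    exact H _ (fun i hi => extV_supported v hi)

lemma sub'_posDef_iff (h : q + d = p) {M : MS p} (hM : M.IsSymm) :
    (sub' p q d M).PosDef ↔
      ∀ u : Fin p → ℝ, (∀ i : Fin p, i.1 < d → u i = 0) → u ≠ 0 → 0 < u ⬝ᵥ M *ᵥ u := by
  constructor
  · intro hp u hu hu0
    have hr : restrV q d u ≠ 0 := by
      intro hz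
      apply hu0
      rw [← extV_restrV h hu, hz]
      funext i
      by_cases hd : d ≤ i.1 ∧ i.1 - d < q <;> simp [extV, hd]
    have h2 := hp.dotProduct_mulVec_pos hr
    rw [star_eq_self, ← dot_extV h, extV_restrV h hu] at h2
    exact h2
  · intro H
    refine Matrix.PosDef.of_dotProduct_mulVec_pos (isHermitian_of_isSymm (sub'_isSymm hM)) fun v hv => ?_
    rw [star_eq_self, ← dot_extV h]
    refine H _ (fun i hi => extV_supported v hi) ?_
    intro hz
    exact hv (extV_eq_zero h hz)

/-- embed a small matrix into the lower-right corner -/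
def emb' (p q d : ℕ) (z : MS q) : MS p :=
  fun i i' => if h : d ≤ i.1 ∧ i.1 - d < q ∧ d ≤ i'.1 ∧ i'.1 - d < q then
    z ⟨i.1 - d, h.2.1⟩ ⟨i'.1 - d, h.2.2.2⟩ else 0

lemma emb'_apply_shift (h : q + d ≤ p) (z : MS q) (r s : Fin q) :
    emb' p q d z ⟨d + r.1, shift_lt h r⟩ ⟨d + s.1, shift_lt h s⟩ = z r s := by
  have h1 : d ≤ d + r.1 ∧ (d + r.1) - d < q ∧ d ≤ d + s.1 ∧ (d + s.1) - d < q :=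
    ⟨by omega, by have := r.2; omega, by omega, by have := s.2; omega⟩
  rw [emb', dif_pos h1]
  congr 1 <;> exact Fin.ext (by simp)

lemma emb'_row_zero (z : MS q) {i : Fin p} (hi : i.1 < d) (i' : Fin p) :
    emb' p q d z i i' = 0 := by
  rw [emb', dif_neg]; omega

lemma sub'_emb' (h : q + d ≤ p) (z : MS q) : sub' p q d (emb' p q d z) = z := by
  funext r s
  rw [sub'_apply h]
  exact emb'_apply_shift h z r s

lemma emb'_isSymm {z : MS q} (hz : z.IsSymm) : (emb' p q d z).IsSymm := by
  have hz' : ∀ r s, z r s = z s r := fun r s => (congrFun (congrFun hz s) r : _)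
  funext i' i
  by_cases h : d ≤ i.1 ∧ i.1 - d < q ∧ d ≤ i'.1 ∧ i'.1 - d < q
  · simp only [Matrix.transpose_apply, emb', dif_pos h,
      dif_pos (⟨h.2.2.1, h.2.2.2, h.1, h.2.1⟩ :
        d ≤ i'.1 ∧ i'.1 - d < q ∧ d ≤ i.1 ∧ i.1 - d < q)]
    exact hz' _ _
  · have h' : ¬ (d ≤ i'.1 ∧ i'.1 - d < q ∧ d ≤ i.1 ∧ i.1 - d < q) := by tauto
    simp only [Matrix.transpose_apply, emb', dif_neg h, dif_neg h']

lemma frob_sq_sum (M : MS p) : ‖M‖ = (∑ i, ∑ j, ‖M i j‖ ^ (2:ℝ)) ^ (1/2 : ℝ) :=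
  Matrix.frobenius_norm_def M

lemma norm_emb' (h : q + d = p) (z : MS q) : ‖emb' p q d z‖ = ‖z‖ := by
  rw [frob_sq_sum, frob_sq_sum]
  congr 1
  rw [sum_shift h _ (fun i hi => Finset.sum_eq_zero fun j _ => by
    rw [emb'_row_zero z hi]; simp [Real.zero_rpow])]
  refine Finset.sum_congr rfl fun r _ => ?_
  rw [sum_shift h _ (fun i' hi' => by
    rw [emb']
    rw [dif_neg (by omega)]
    simp [Real.zero_rpow])]
  refine Finset.sum_congr rfl fun s _ => ?_
  rw [emb'_apply_shift h.le]

lemma norm_sub'_le (h : q + d ≤ p) (M : MS p) : ‖sub' p q d M‖ ≤ ‖M‖ := by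
  rw [frob_sq_sum, frob_sq_sum]
  refine Real.rpow_le_rpow ?_ ?_ (by norm_num)
  · exact Finset.sum_nonneg fun i _ => Finset.sum_nonneg fun j _ => Real.rpow_nonneg (norm_nonneg _) _
  · classical
    set g : Fin q → Fin p := fun r => ⟨d + r.1, shift_lt h r⟩ with hg
    have hinj : Function.Injective g := by
      intro a b hab
      have := congrArg Fin.val hab
      simp [hg] at this
      exact Fin.ext this
    have hinj' : ∀ a ∈ Finset.univ, ∀ b ∈ Finset.univ, g a = g b → a = b :=
      fun a _ b _ hab => hinj hab
    set F : Fin p → Fin p → ℝ := fun i j => ‖M i j‖ ^ (2:ℝ) with hF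
    have hFnn : ∀ i j, 0 ≤ F i j := fun i j => Real.rpow_nonneg (norm_nonneg _) _
    calc ∑ r, ∑ s, ‖sub' p q d M r s‖ ^ (2:ℝ)
        = ∑ r, ∑ s, F (g r) (g s) := by
          refine Finset.sum_congr rfl fun r _ => Finset.sum_congr rfl fun s _ => ?_
          rw [sub'_apply h]
      _ ≤ ∑ r, ∑ j, F (g r) j := by
          refine Finset.sum_le_sum fun r _ => ?_
          rw [← Finset.sum_image (g := g) (f := F (g r)) hinj']
          refine Finset.sum_le_sum_of_subset_of_nonneg (Finset.subset_univ _) ?_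
          intro x _ _; exact hFnn _ _
      _ ≤ ∑ i, ∑ j, F i j := by
          rw [← Finset.sum_image (g := g) (f := fun i => ∑ j, F i j) hinj']
          refine Finset.sum_le_sum_of_subset_of_nonneg (Finset.subset_univ _) ?_
          intro x _ _; exact Finset.sum_nonneg fun j _ => hFnn _ _

lemma dot_eq_zero {M : MS p} {v w : Fin p → ℝ}
    (h : ∀ i i' : Fin p, v i ≠ 0 → w i' ≠ 0 → M i i' = 0) : v ⬝ᵥ M *ᵥ w = 0 := by
  rw [dmv]
  refine Finset.sum_eq_zero fun i _ => Finset.sum_eq_zero fun j _ => ?_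
  by_cases hv : v i = 0
  · rw [hv]; ring
  by_cases hw : w j = 0
  · rw [hw]; ring
  rw [h i j hv hw]; ring

lemma dot_symm {M : MS p} (hM : M.IsSymm) (v w : Fin p → ℝ) :
    v ⬝ᵥ M *ᵥ w = w ⬝ᵥ M *ᵥ v := by
  have hM' : ∀ i j, M i j = M j i := fun i j => (congrFun (congrFun hM j) i : _)
  rw [dmv, dmv, Finset.sum_comm]
  refine Finset.sum_congr rfl fun j _ => Finset.sum_congr rfl fun i _ => ?_
  rw [hM' i j]; ring

/-- entrywise absolute sum -/
def Mabs (M : MS p) : ℝ := ∑ i, ∑ j, |M i j|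

lemma Mabs_nonneg (M : MS p) : 0 ≤ Mabs M :=
  Finset.sum_nonneg fun i _ => Finset.sum_nonneg fun j _ => abs_nonneg _

lemma dot_abs_le (M : MS p) (v w : Fin p → ℝ) :
    |v ⬝ᵥ M *ᵥ w| ≤ Mabs M * (Real.sqrt (ns v) * Real.sqrt (ns w)) := by
  rw [dmv, Mabs]
  calc |∑ i, ∑ j, v i * (M i j * w j)|
      ≤ ∑ i, |∑ j, v i * (M i j * w j)| := Finset.abs_sum_le_sum_abs _ _
    _ ≤ ∑ i, ∑ j, |v i * (M i j * w j)| :=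
        Finset.sum_le_sum fun i _ => Finset.abs_sum_le_sum_abs _ _
    _ ≤ ∑ i, ∑ j, |M i j| * (Real.sqrt (ns v) * Real.sqrt (ns w)) := by
        refine Finset.sum_le_sum fun i _ => Finset.sum_le_sum fun j _ => ?_
        rw [abs_mul, abs_mul]
        have h1 : |v i| * (|M i j| * |w j|) = |M i j| * (|v i| * |w j|) := by ring
        rw [h1]
        refine mul_le_mul_of_nonneg_left ?_ (abs_nonneg _)
        exact mul_le_mul (abs_le_sqrt_ns v i) (abs_le_sqrt_ns w j) (abs_nonneg _)
          (Real.sqrt_nonneg _)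
    _ = (∑ i, ∑ j, |M i j|) * (Real.sqrt (ns v) * Real.sqrt (ns w)) := by
        rw [Finset.sum_mul]
        exact Finset.sum_congr rfl fun i _ => (Finset.sum_mul _ _ _).symm

lemma dot_abs_le' (M : MS p) (v : Fin p → ℝ) : |v ⬝ᵥ M *ᵥ v| ≤ Mabs M * ns v := by
  have := dot_abs_le M v v
  rwa [Real.mul_self_sqrt (ns_nonneg v)] at this

lemma ns_smul (c : ℝ) (v : Fin k → ℝ) : ns (c • v) = c ^ 2 * ns v := by
  rw [ns, ns, Finset.mul_sum]
  exact Finset.sum_congr rfl fun i _ => by simp [mul_pow]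

lemma dot_smul_smul (M : MS k) (c : ℝ) (v : Fin k → ℝ) :
    (c • v) ⬝ᵥ M *ᵥ (c • v) = c ^ 2 * (v ⬝ᵥ M *ᵥ v) := by
  rw [Matrix.mulVec_smul, dotProduct_smul, smul_dotProduct]
  simp [smul_eq_mul]; ring

lemma cont_quad (M : MS k) : Continuous fun v : Fin k → ℝ => v ⬝ᵥ M *ᵥ v := by
  have : (fun v : Fin k → ℝ => v ⬝ᵥ M *ᵥ v) =
      fun v => ∑ i, ∑ j, v i * (M i j * v j) := funext fun v => dmv M v v
  rw [this]
  refine continuous_finset_sum _ fun i _ => continuous_finset_sum _ fun j _ => ?_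
  exact (continuous_apply i).mul (continuous_const.mul (continuous_apply j))

lemma cont_ns : Continuous (ns (p := k)) := by
  refine continuous_finset_sum _ fun i _ => ?_
  exact (continuous_apply i).pow 2

lemma posdef_quad_bound {M : MS k} (hM : M.PosDef) :
    ∃ α > 0, ∀ w : Fin k → ℝ, α * ns w ≤ w ⬝ᵥ M *ᵥ w := by
  rcases Nat.eq_zero_or_pos k with hk | hk
  · subst hk
    refine ⟨1, one_pos, fun w => ?_⟩
    have h1 : ns w = 0 := by rw [ns]; exact Finset.sum_of_isEmpty _
    have h2 : w ⬝ᵥ M *ᵥ w = 0 := by rw [dmv]; exact Finset.sum_of_isEmpty _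
    rw [h1, h2]; norm_num
  · set S : Set (Fin k → ℝ) := {w | ns w = 1} with hS
    have hclosed : IsClosed S := isClosed_eq cont_ns continuous_const
    have hbdd : Bornology.IsBounded S := by
      refine (Metric.isBounded_closedBall (x := (0 : Fin k → ℝ)) (r := 1)).subset ?_
      intro w hw
      rw [Metric.mem_closedBall, dist_zero_right]
      refine pi_norm_le_iff_of_nonneg zero_le_one |>.2 fun i => ?_
      have := abs_le_sqrt_ns w i
      rw [hw] at this
      simpa using this
    have hcompact : IsCompact S := Metric.isCompact_of_isClosed_isBounded hclosed hbdd
    have hne : S.Nonempty := by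
      refine ⟨fun i => if i = ⟨0, hk⟩ then 1 else 0, ?_⟩
      show ns _ = 1
      rw [ns, Finset.sum_eq_single ⟨0, hk⟩]
      · simp
      · intro b _ hb; simp [hb]
      · intro h; exact absurd (Finset.mem_univ _) h
    obtain ⟨w₀, hw₀S, hmin⟩ := hcompact.exists_isMinOn hne (cont_quad M).continuousOn
    have hw₀ne : w₀ ≠ 0 := by
      intro h0
      have : ns w₀ = 1 := hw₀S
      rw [h0] at this
      simp [ns] at this
    have hα : 0 < w₀ ⬝ᵥ M *ᵥ w₀ := by
      have := hM.dotProduct_mulVec_pos hw₀ne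
      rwa [star_eq_self] at this
    refine ⟨_, hα, fun w => ?_⟩
    by_cases hw : w = 0
    · subst hw
      simp [ns, Matrix.mulVec_zero, dotProduct_zero]
    · have hnsw : 0 < ns w := ns_pos hw
      set c : ℝ := (Real.sqrt (ns w))⁻¹ with hc
      have hsq : Real.sqrt (ns w) ^ 2 = ns w := Real.sq_sqrt (le_of_lt hnsw)
      have hsp : 0 < Real.sqrt (ns w) := Real.sqrt_pos.2 hnsw
      have hcw : c • w ∈ S := by
        show ns (c • w) = 1
        rw [ns_smul, hc, inv_pow, hsq]
        field_simp
      have h2 := hmin hcw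
      have h3 : (c • w) ⬝ᵥ M *ᵥ (c • w) = c ^ 2 * (w ⬝ᵥ M *ᵥ w) := dot_smul_smul M c w
      have h4 : (w₀ ⬝ᵥ M *ᵥ w₀) ≤ c ^ 2 * (w ⬝ᵥ M *ᵥ w) := by
        rw [← h3]; exact h2
      have hc2 : c ^ 2 = (ns w)⁻¹ := by rw [hc, inv_pow, hsq]
      rw [hc2] at h4
      have h5 := mul_le_mul_of_nonneg_right h4 (le_of_lt hnsw)
      rw [mul_comm ((ns w)⁻¹) _, mul_assoc, inv_mul_cancel₀ (ne_of_gt hnsw), mul_one] at h5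
      exact h5

lemma corePD {p k : ℕ} {y : MS p} (hy : y.IsSymm)
    {α β γ : ℝ} (hα : 0 < α) (hβ : 0 < β) (hγ : 0 ≤ γ) (hαβγ : γ ^ 2 < α * β)
    (htop : ∀ v : Fin p → ℝ, (∀ i : Fin p, k ≤ i.1 → v i = 0) → α * ns v ≤ v ⬝ᵥ y *ᵥ v)
    (hbot : ∀ v : Fin p → ℝ, (∀ i : Fin p, i.1 < k → v i = 0) → β * ns v ≤ v ⬝ᵥ y *ᵥ v)
    (hcross : ∀ v w : Fin p → ℝ, (∀ i : Fin p, k ≤ i.1 → v i = 0) →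
      (∀ i : Fin p, i.1 < k → w i = 0) →
      |v ⬝ᵥ y *ᵥ w| ≤ γ * (Real.sqrt (ns v) * Real.sqrt (ns w))) :
    y.PosDef := by
  refine Matrix.PosDef.of_dotProduct_mulVec_pos (isHermitian_of_isSymm hy) fun v hv => ?_
  rw [star_eq_self]
  set v₁ : Fin p → ℝ := fun i => if i.1 < k then v i else 0 with hv₁
  set v₂ : Fin p → ℝ := fun i => if i.1 < k then 0 else v i with hv₂
  have hsup1 : ∀ i : Fin p, k ≤ i.1 → v₁ i = 0 := fun i hi => by simp [hv₁]; omega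
  have hsup2 : ∀ i : Fin p, i.1 < k → v₂ i = 0 := fun i hi => by simp [hv₂]; omega
  have hv12 : v = v₁ + v₂ := by
    funext i
    by_cases h : i.1 < k <;> simp [hv₁, hv₂, h]
  have hexp : v ⬝ᵥ y *ᵥ v =
      v₁ ⬝ᵥ y *ᵥ v₁ + 2 * (v₁ ⬝ᵥ y *ᵥ v₂) + v₂ ⬝ᵥ y *ᵥ v₂ := by
    rw [hv12]
    simp only [Matrix.mulVec_add, dotProduct_add, add_dotProduct]
    rw [dot_symm hy v₂ v₁]
    ring
  have hns : ns v = ns v₁ + ns v₂ := by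
    rw [ns, ns, ns, ← Finset.sum_add_distrib]
    refine Finset.sum_congr rfl fun i _ => ?_
    by_cases h : i.1 < k <;> simp [hv₁, hv₂, h]
  have h1 := htop v₁ hsup1
  have h2 := hbot v₂ hsup2
  have h3 := hcross v₁ v₂ hsup1 hsup2
  set s₁ : ℝ := Real.sqrt (ns v₁) with hs₁
  set s₂ : ℝ := Real.sqrt (ns v₂) with hs₂
  have hss1 : s₁ ^ 2 = ns v₁ := Real.sq_sqrt (ns_nonneg _)
  have hss2 : s₂ ^ 2 = ns v₂ := Real.sq_sqrt (ns_nonneg _)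
  have hs1nn : 0 ≤ s₁ := Real.sqrt_nonneg _
  have hs2nn : 0 ≤ s₂ := Real.sqrt_nonneg _
  have hnsv : 0 < ns v := ns_pos hv
  have hcross' : -(γ * (s₁ * s₂)) ≤ v₁ ⬝ᵥ y *ᵥ v₂ := neg_le_of_abs_le h3 |>.trans_eq rfl
  have hlow : α * s₁ ^ 2 - 2 * (γ * (s₁ * s₂)) + β * s₂ ^ 2 ≤ v ⬝ᵥ y *ᵥ v := by
    rw [hexp, hss1, hss2]
    have := neg_le_of_abs_le h3
    nlinarith [h1, h2, this]
  have hpos : 0 < α * s₁ ^ 2 - 2 * (γ * (s₁ * s₂)) + β * s₂ ^ 2 := by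
    have hsum : 0 < s₁ ^ 2 + s₂ ^ 2 := by rw [hss1, hss2, ← hns]; exact hnsv
    rcases eq_or_lt_of_le hs2nn with h20 | h20
    · have hsq1 : s₁ ^ 2 > 0 := by nlinarith [hss2]
      rw [← h20]
      ring_nf
      nlinarith [mul_pos hα hsq1]
    · have key : 0 < (α * β - γ ^ 2) * s₂ ^ 2 := by
        have : 0 < α * β - γ ^ 2 := by nlinarith
        positivity
      nlinarith [sq_nonneg (α * s₁ - γ * s₂), key, hα]
  linarith

lemma ns_trunc (hk : k ≤ p) {v : Fin p → ℝ} (hv : ∀ i : Fin p, k ≤ i.1 → v i = 0) :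
    ns v = ns (v ∘ Fin.castLE hk) := by
  rw [ns, sum_trunc hk _ (fun i hi => by rw [hv i hi]; ring)]
  rfl

lemma dot_trunc (hk : k ≤ p) (M : MS p) {v : Fin p → ℝ}
    (hv : ∀ i : Fin p, k ≤ i.1 → v i = 0) :
    v ⬝ᵥ M *ᵥ v = (v ∘ Fin.castLE hk) ⬝ᵥ
      (M.submatrix (Fin.castLE hk) (Fin.castLE hk)) *ᵥ (v ∘ Fin.castLE hk) := by
  rw [dmv, dmv]
  rw [sum_trunc hk _ (fun i hi => by
    rw [hv i hi]; exact Finset.sum_eq_zero fun j _ => by ring)]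
  refine Finset.sum_congr rfl fun r _ => ?_
  rw [sum_trunc hk _ (fun i hi => by rw [hv i hi]; ring)]
  rfl

section step
variable {n j j' : ℕ} {a x : MS n}

lemma sub'_corner (hjj' : j ≤ j') (hj'n : j' ≤ n) (M : MS n) :
    (sub' n (n - j) j M).submatrix (Fin.castLE (by omega : j' - j ≤ n - j))
      (Fin.castLE (by omega : j' - j ≤ n - j)) = sub' n (j' - j) j M := by
  funext r s
  have hr := r.2; have hs := s.2
  rw [Matrix.submatrix_apply, sub'_apply (by omega), sub'_apply (by omega)]
  rfl

lemma stair_row_zero (hjj' : j ≤ j') (hj'n : j' ≤ n) (ha : staircase n j j' a)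
    {r s : Fin (n - j)} (hrs : j' - j ≤ r.1 ∨ j' - j ≤ s.1) :
    sub' n (n - j) j a r s = 0 := by
  have hr := r.2; have hs := s.2
  rw [sub'_apply (by omega)]
  exact ha.2 _ _ (by simp) (by simp) (by simp; omega)

lemma top_bound (hjj' : j ≤ j') (hj'n : j' ≤ n) (ha : staircase n j j' a) :
    ∃ α₀ > 0, ∀ v : Fin (n - j) → ℝ, (∀ i : Fin (n - j), j' - j ≤ i.1 → v i = 0) →
      α₀ * ns v ≤ v ⬝ᵥ (sub' n (n - j) j a) *ᵥ v := by
  have hPD : (sub' n (j' - j) j a).PosDef := ha.1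
  obtain ⟨α₀, hα₀, hb⟩ := posdef_quad_bound hPD
  refine ⟨α₀, hα₀, fun v hv => ?_⟩
  have hk : j' - j ≤ n - j := by omega
  rw [dot_trunc hk _ hv, sub'_corner hjj' hj'n, ns_trunc hk hv]
  exact hb _

lemma bot_dot (hjj' : j ≤ j') (hj'n : j' ≤ n) (M : MS n) {v : Fin (n - j) → ℝ}
    (hv : ∀ i : Fin (n - j), i.1 < j' - j → v i = 0) :
    v ⬝ᵥ (sub' n (n - j) j M) *ᵥ v =
      (restrV (n - j') (j' - j) v) ⬝ᵥ (sub' n (n - j') j' M) *ᵥ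
        (restrV (n - j') (j' - j) v) := by
  have h : (n - j') + (j' - j) = n - j := by omega
  conv_lhs => rw [← extV_restrV h hv]
  rw [dot_extV h, sub'_sub' hjj' hj'n]

lemma bot_ns (hjj' : j ≤ j') (hj'n : j' ≤ n) {v : Fin (n - j) → ℝ}
    (hv : ∀ i : Fin (n - j), i.1 < j' - j → v i = 0) :
    ns v = ns (restrV (n - j') (j' - j) v) := by
  have h : (n - j') + (j' - j) = n - j := by omega
  conv_lhs => rw [← extV_restrV h hv]
  rw [ns_extV h]

lemma isSymm_comb (hx : x.IsSymm) (hax : a.IsSymm) (t : ℝ) : (x + t • a).IsSymm := by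
  rw [Matrix.IsSymm, Matrix.transpose_add, Matrix.transpose_smul, hx, hax]

lemma S1 (hjj' : j ≤ j') (hj'n : j' ≤ n) (ha : staircase n j j' a)
    (hx : x.IsSymm) (hax : a.IsSymm)
    (hbotPD : (sub' n (n - j') j' x).PosDef) :
    ∃ t : ℝ, (sub' n (n - j) j (x + t • a)).PosDef := by
  obtain ⟨α₀, hα₀, htopb⟩ := top_bound hjj' hj'n ha
  obtain ⟨β, hβ, hbotb⟩ := posdef_quad_bound hbotPD
  set C : ℝ := Mabs (sub' n (n - j) j x) with hC
  have hCnn : 0 ≤ C := Mabs_nonneg _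
  set t : ℝ := (C + C ^ 2 / β + 1) / α₀ with ht
  have htα : t * α₀ = C + C ^ 2 / β + 1 := div_mul_cancel₀ _ (ne_of_gt hα₀)
  have htpos : 0 < t := by
    rw [ht]
    apply div_pos _ hα₀
    have : 0 ≤ C ^ 2 / β := div_nonneg (sq_nonneg _) hβ.le
    linarith
  set α : ℝ := C ^ 2 / β + 1 with hα'
  have hαt : t * α₀ - C = α := by rw [htα, hα']; ring
  have hαpos : 0 < α := by
    have : 0 ≤ C ^ 2 / β := div_nonneg (sq_nonneg _) hβ.le
    rw [hα']; linarith
  have hγαβ : C ^ 2 < α * β := by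
    rw [hα', add_mul, div_mul_cancel₀ _ (ne_of_gt hβ), one_mul]
    linarith
  refine ⟨t, ?_⟩
  have hysplit : sub' n (n - j) j (x + t • a) =
      sub' n (n - j) j x + t • sub' n (n - j) j a := by
    rw [sub'_add, sub'_smul]
  have hval : ∀ v w : Fin (n - j) → ℝ,
      v ⬝ᵥ (sub' n (n - j) j (x + t • a)) *ᵥ w =
        v ⬝ᵥ (sub' n (n - j) j x) *ᵥ w + t * (v ⬝ᵥ (sub' n (n - j) j a) *ᵥ w) := by
    intro v w
    rw [hysplit, Matrix.add_mulVec, Matrix.smul_mulVec, dotProduct_add, dotProduct_smul]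
    simp [smul_eq_mul]
  refine corePD (k := j' - j) (sub'_isSymm (isSymm_comb hx hax t)) hαpos hβ hCnn hγαβ ?_ ?_ ?_
  · intro v hv
    rw [hval]
    have h1 := htopb v hv
    have h2 : -(C * ns v) ≤ v ⬝ᵥ (sub' n (n - j) j x) *ᵥ v :=
      neg_le_of_abs_le (dot_abs_le' _ _)
    have h3 : t * (α₀ * ns v) ≤ t * (v ⬝ᵥ (sub' n (n - j) j a) *ᵥ v) :=
      mul_le_mul_of_nonneg_left h1 htpos.le
    calc α * ns v = -(C * ns v) + (t * α₀) * ns v := by rw [← hαt]; ring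
      _ ≤ _ := by rw [mul_assoc]; linarith
  · intro v hv
    rw [hval]
    have hzero : v ⬝ᵥ (sub' n (n - j) j a) *ᵥ v = 0 := by
      refine dot_eq_zero fun i i' hvi _ => ?_
      refine stair_row_zero hjj' hj'n ha (Or.inl ?_)
      by_contra hlt
      exact hvi (hv i (by omega))
    rw [hzero, mul_zero, add_zero, bot_dot hjj' hj'n x hv, bot_ns hjj' hj'n hv]
    exact hbotb _
  · intro v w hv hw
    rw [hval]
    have hzero : v ⬝ᵥ (sub' n (n - j) j a) *ᵥ w = 0 := by
      refine dot_eq_zero fun i i' _ hwi' => ?_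
      refine stair_row_zero hjj' hj'n ha (Or.inr ?_)
      by_contra hlt
      exact hwi' (hw i' (by omega))
    rw [hzero, mul_zero, add_zero]
    exact dot_abs_le _ _ _

lemma dot_one (q : ℕ) (v : Fin q → ℝ) : v ⬝ᵥ (1 : MS q) *ᵥ v = ns v := by
  rw [Matrix.one_mulVec]
  simp [dotProduct, ns, sq]

lemma S2 (hjj' : j ≤ j') (hj'n : j' ≤ n) (ha : staircase n j j' a)
    (hx : x.IsSymm) (hax : a.IsSymm)
    {p₀ : MS (n - j')} (hp₀ : p₀.PosSemidef) {δ : ℝ} (hδ : 0 < δ) :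
    ∃ t : ℝ, ∃ P : MS (n - j), P.PosSemidef ∧
      ‖P - sub' n (n - j) j (x + t • a)‖ ≤ ‖p₀ - sub' n (n - j') j' x‖ + δ := by
  have hcast : (n - j') + (j' - j) = n - j := by omega
  obtain ⟨α₀, hα₀, htopb⟩ := top_bound hjj' hj'n ha
  set δ' : ℝ := δ / (1 + ‖(1 : MS (n - j'))‖) with hδ'
  have honepos : (0:ℝ) < 1 + ‖(1 : MS (n - j'))‖ := by positivity
  have hδ'pos : 0 < δ' := div_pos hδ honepos
  have hδ'norm : δ' * ‖(1 : MS (n - j'))‖ ≤ δ := by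
    rw [hδ', div_mul_eq_mul_div, div_le_iff₀ honepos]
    have h1 : 0 ≤ ‖(1 : MS (n - j'))‖ := norm_nonneg _
    nlinarith
  set w : MS (n - j') := p₀ + δ' • (1 : MS (n - j')) - sub' n (n - j') j' x with hw
  set C : ℝ := Mabs (sub' n (n - j) j x) with hC
  have hCnn : 0 ≤ C := Mabs_nonneg _
  set t : ℝ := (C + C ^ 2 / δ' + 1) / α₀ with ht
  have htα : t * α₀ = C + C ^ 2 / δ' + 1 := div_mul_cancel₀ _ (ne_of_gt hα₀)
  have htpos : 0 < t := by
    rw [ht]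
    apply div_pos _ hα₀
    have : 0 ≤ C ^ 2 / δ' := div_nonneg (sq_nonneg _) hδ'pos.le
    linarith
  set α : ℝ := C ^ 2 / δ' + 1 with hα'
  have hαt : t * α₀ - C = α := by rw [htα, hα']; ring
  have hαpos : 0 < α := by
    have : 0 ≤ C ^ 2 / δ' := div_nonneg (sq_nonneg _) hδ'pos.le
    rw [hα']; linarith
  have hγαβ : C ^ 2 < α * δ' := by
    rw [hα', add_mul, div_mul_cancel₀ _ (ne_of_gt hδ'pos), one_mul]
    linarith
  set E : MS (n - j) := emb' (n - j) (n - j') (j' - j) w with hE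
  set P : MS (n - j) := sub' n (n - j) j (x + t • a) + E with hP
  have hwsymm : w.IsSymm := by
    rw [Matrix.IsSymm, hw, Matrix.transpose_sub, Matrix.transpose_add, Matrix.transpose_smul,
      Matrix.transpose_one, isSymm_of_isHermitian hp₀.1, sub'_isSymm hx]
  have hval : ∀ v u : Fin (n - j) → ℝ,
      v ⬝ᵥ P *ᵥ u = v ⬝ᵥ (sub' n (n - j) j x) *ᵥ u
        + t * (v ⬝ᵥ (sub' n (n - j) j a) *ᵥ u) + v ⬝ᵥ E *ᵥ u := by
    intro v u
    rw [hP, Matrix.add_mulVec, dotProduct_add, sub'_add, sub'_smul, Matrix.add_mulVec,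
      Matrix.smul_mulVec, dotProduct_add, dotProduct_smul]
    simp [smul_eq_mul]
  have hPsymm : P.IsSymm := by
    rw [Matrix.IsSymm, hP, Matrix.transpose_add, sub'_isSymm (isSymm_comb hx hax t),
      hE, emb'_isSymm hwsymm]
  have hPD : P.PosDef := by
    refine corePD (k := j' - j) hPsymm hαpos hδ'pos hCnn hγαβ ?_ ?_ ?_
    · intro v hv
      rw [hval]
      have hE0 : v ⬝ᵥ E *ᵥ v = 0 := by
        refine dot_eq_zero fun i i' hvi _ => ?_
        refine emb'_row_zero w ?_ i'
        by_contra hlt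
        exact hvi (hv i (by omega))
      rw [hE0, add_zero]
      have h1 := htopb v hv
      have h2 : -(C * ns v) ≤ v ⬝ᵥ (sub' n (n - j) j x) *ᵥ v :=
        neg_le_of_abs_le (dot_abs_le' _ _)
      have h3 : t * (α₀ * ns v) ≤ t * (v ⬝ᵥ (sub' n (n - j) j a) *ᵥ v) :=
        mul_le_mul_of_nonneg_left h1 htpos.le
      calc α * ns v = -(C * ns v) + (t * α₀) * ns v := by rw [← hαt]; ring
        _ ≤ _ := by rw [mul_assoc]; linarith
    · intro v hv
      rw [hval]
      have hzeroa : v ⬝ᵥ (sub' n (n - j) j a) *ᵥ v = 0 := by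
        refine dot_eq_zero fun i i' hvi _ => ?_
        refine stair_row_zero hjj' hj'n ha (Or.inl ?_)
        by_contra hlt
        exact hvi (hv i (by omega))
      set v' : Fin (n - j') → ℝ := restrV (n - j') (j' - j) v with hv'
      have hEv : v ⬝ᵥ E *ᵥ v = v' ⬝ᵥ w *ᵥ v' := by
        conv_lhs => rw [← extV_restrV hcast hv]
        rw [dot_extV hcast, hE, sub'_emb' hcast.le]
      have hxv : v ⬝ᵥ (sub' n (n - j) j x) *ᵥ v = v' ⬝ᵥ (sub' n (n - j') j' x) *ᵥ v' :=
        bot_dot hjj' hj'n x hv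
      have hcomb : v' ⬝ᵥ (sub' n (n - j') j' x) *ᵥ v' + v' ⬝ᵥ w *ᵥ v'
          = v' ⬝ᵥ p₀ *ᵥ v' + δ' * ns v' := by
        have hsum : (sub' n (n - j') j' x) + w = p₀ + δ' • (1 : MS (n - j')) := by
          rw [hw]; abel
        have := congrArg (fun M : MS (n - j') => v' ⬝ᵥ M *ᵥ v') hsum
        simp only [Matrix.add_mulVec, dotProduct_add, Matrix.smul_mulVec,
          dotProduct_smul, smul_eq_mul] at this
        rw [this, dot_one]
      have hp0v : 0 ≤ v' ⬝ᵥ p₀ *ᵥ v' := by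
        have := hp₀.dotProduct_mulVec_nonneg v'
        rwa [star_eq_self] at this
      have hnsv : ns v = ns v' := bot_ns hjj' hj'n hv
      rw [hzeroa, mul_zero, add_zero, hxv, hEv, hcomb, hnsv]
      linarith
    · intro v u hv hu
      rw [hval]
      have hzeroa : v ⬝ᵥ (sub' n (n - j) j a) *ᵥ u = 0 := by
        refine dot_eq_zero fun i i' _ hui' => ?_
        refine stair_row_zero hjj' hj'n ha (Or.inr ?_)
        by_contra hlt
        exact hui' (hu i' (by omega))
      have hE0 : v ⬝ᵥ E *ᵥ u = 0 := by
        refine dot_eq_zero fun i i' hvi _ => ?_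
        refine emb'_row_zero w ?_ i'
        by_contra hlt
        exact hvi (hv i (by omega))
      rw [hzeroa, mul_zero, add_zero, hE0, add_zero]
      exact dot_abs_le _ _ _
  refine ⟨t, P, hPD.posSemidef, ?_⟩
  have hdiff : P - sub' n (n - j) j (x + t • a) = E := add_sub_cancel_left _ _
  rw [hdiff, hE, norm_emb' hcast]
  calc ‖w‖ ≤ ‖p₀ - sub' n (n - j') j' x‖ + ‖δ' • (1 : MS (n - j'))‖ := by
        rw [hw]
        have : p₀ + δ' • (1 : MS (n - j')) - sub' n (n - j') j' x
            = (p₀ - sub' n (n - j') j' x) + δ' • (1 : MS (n - j')) := by abel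
        rw [this]
        exact norm_add_le _ _
    _ ≤ ‖p₀ - sub' n (n - j') j' x‖ + δ := by
        rw [norm_smul, Real.norm_eq_abs, abs_of_pos hδ'pos]
        linarith

end step

lemma sdist_nonneg {q : ℕ} (C D : Set (MS q)) : 0 ≤ sdist C D :=
  Real.sInf_nonneg fun x hx => by
    obtain ⟨u, _, v, _, rfl⟩ := hx
    exact dist_nonneg

lemma sdist_le {q : ℕ} {C D : Set (MS q)} {u v : MS q} (hu : u ∈ C) (hv : v ∈ D) :
    sdist C D ≤ dist u v := by
  refine csInf_le ⟨0, fun x hx => ?_⟩ (Set.mem_image2_of_mem hu hv)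
  obtain ⟨u', _, v', _, rfl⟩ := hx
  exact dist_nonneg

lemma sdist_eq_zero_of {q : ℕ} {C D : Set (MS q)}
    (h : ∀ ε > (0:ℝ), ∃ u ∈ C, ∃ v ∈ D, dist u v < ε) : sdist C D = 0 := by
  refine le_antisymm ?_ (sdist_nonneg C D)
  by_contra hlt
  push_neg at hlt
  obtain ⟨u, hu, v, hv, hd⟩ := h _ hlt
  exact absurd (sdist_le hu hv) (not_le.2 hd)

lemma exists_of_sdist_eq_zero {q : ℕ} {C D : Set (MS q)} (hC : C.Nonempty) (hD : D.Nonempty)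
    (h : sdist C D = 0) : ∀ ε > (0:ℝ), ∃ u ∈ C, ∃ v ∈ D, dist u v < ε := by
  intro ε hε
  have hne : (Set.image2 dist C D).Nonempty := Set.Nonempty.image2 hC hD
  have hbdd : BddBelow (Set.image2 dist C D) := ⟨0, fun x hx => by
    obtain ⟨u', _, v', _, rfl⟩ := hx
    exact dist_nonneg⟩
  have : sInf (Set.image2 dist C D) < ε := by rw [← sdist] at *; rw [h]; exact hε
  obtain ⟨x, hx, hxε⟩ := (csInf_lt_iff hbdd hne).1 this
  obtain ⟨u, hu, v, hv, rfl⟩ := hx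
  exact ⟨u, hu, v, hv, hxε⟩

lemma psd_zero {q : ℕ} : (0 : MS q).PosSemidef := Matrix.PosSemidef.zero

lemma sdist_zero_of_feas {q : ℕ} {D : Set (MS q)} (h : ∃ u ∈ D, u.PosSemidef) :
    sdist (PSD q) D = 0 := by
  obtain ⟨u, hu, hpsd⟩ := h
  exact sdist_eq_zero_of fun ε hε => ⟨u, hpsd, u, hu, by rwa [dist_self]⟩

section stepmain
variable {n j j' : ℕ} {L : Submodule ℝ (MS n)} {c : MS n}

lemma affSet_isSymm (hL : ∀ y ∈ L, y.IsSymm) (hc : c.IsSymm) {x : MS n}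
    (hx : x ∈ affSet L c) : x.IsSymm := by
  obtain ⟨l, hl, rfl⟩ := hx
  rw [Matrix.IsSymm, Matrix.transpose_add, hL l hl, hc]

lemma affSet_add_mem {a : MS n} (haL : a ∈ L) {x : MS n} (hx : x ∈ affSet L c) (t : ℝ) :
    x + t • a ∈ affSet L c := by
  obtain ⟨l, hl, rfl⟩ := hx
  exact ⟨l + t • a, L.add_mem hl (L.smul_mem t haL), by abel⟩

lemma affSet_nonempty (L : Submodule ℝ (MS n)) (c : MS n) : (affSet L c).Nonempty :=
  ⟨c, 0, L.zero_mem, (zero_add c).symm⟩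

lemma psd_down (hjj' : j ≤ j') (hj'n : j' ≤ n) {x : MS n} (hx : x.IsSymm)
    (h : (sub' n (n - j) j x).PosSemidef) : (sub' n (n - j') j' x).PosSemidef := by
  have h1 : (n - j) + j = n := by omega
  have h2 : (n - j') + j' = n := by omega
  rw [sub'_posSemidef_iff h2 hx]
  intro u hu
  exact (sub'_posSemidef_iff h1 hx).1 h u (fun i hi => hu i (by omega))

lemma pd_down (hjj' : j ≤ j') (hj'n : j' ≤ n) {x : MS n} (hx : x.IsSymm)
    (h : (sub' n (n - j) j x).PosDef) : (sub' n (n - j') j' x).PosDef := by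
  have h1 : (n - j) + j = n := by omega
  have h2 : (n - j') + j' = n := by omega
  rw [sub'_posDef_iff h2 hx]
  intro u hu hu0
  exact (sub'_posDef_iff h1 hx).1 h u (fun i hi => hu i (by omega)) hu0

lemma step (hjj' : j ≤ j') (hj'n : j' ≤ n) (hL : ∀ y ∈ L, y.IsSymm) (hc : c.IsSymm)
    {a : MS n} (haL : a ∈ L) (ha : staircase n j j' a) :
    weakStatus (sub' n (n - j) j '' affSet L c) ↔
      weakStatus (sub' n (n - j') j' '' affSet L c) := by
  have hsym : ∀ x ∈ affSet L c, x.IsSymm := fun x hx => affSet_isSymm hL hc hx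
  have haS : a.IsSymm := hL a haL
  set Dj : Set (MS (n - j)) := sub' n (n - j) j '' affSet L c with hDj
  set Dj' : Set (MS (n - j')) := sub' n (n - j') j' '' affSet L c with hDj'
  have hDjne : Dj.Nonempty := (affSet_nonempty L c).image _
  have hDj'ne : Dj'.Nonempty := (affSet_nonempty L c).image _
  have hPD : (∃ u ∈ Dj, u.PosDef) ↔ (∃ u ∈ Dj', u.PosDef) := by
    constructor
    · rintro ⟨u, ⟨x, hxD, rfl⟩, hu⟩
      exact ⟨_, ⟨x, hxD, rfl⟩, pd_down hjj' hj'n (hsym x hxD) hu⟩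
    · rintro ⟨u, ⟨x, hxD, rfl⟩, hu⟩
      obtain ⟨t, hPDt⟩ := S1 hjj' hj'n ha (hsym x hxD) haS hu
      exact ⟨_, ⟨x + t • a, affSet_add_mem haL hxD t, rfl⟩, hPDt⟩
  have hPSD : (∃ u ∈ Dj, u.PosSemidef) → (∃ u ∈ Dj', u.PosSemidef) := by
    rintro ⟨u, ⟨x, hxD, rfl⟩, hu⟩
    exact ⟨_, ⟨x, hxD, rfl⟩, psd_down hjj' hj'n (hsym x hxD) hu⟩
  have hZdown : sdist (PSD (n - j)) Dj = 0 → sdist (PSD (n - j')) Dj' = 0 := by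
    intro hz
    refine sdist_eq_zero_of fun ε hε => ?_
    have hCne : (PSD (n - j)).Nonempty := ⟨0, psd_zero⟩
    obtain ⟨p₁, hp₁, u, hu, hd⟩ := exists_of_sdist_eq_zero hCne hDjne hz ε hε
    obtain ⟨x, hxD, rfl⟩ := hu
    have hcast : (n - j') + (j' - j) = n - j := by omega
    have hp₁' : p₁.PosSemidef := hp₁
    refine ⟨sub' (n - j) (n - j') (j' - j) p₁, ?_, sub' n (n - j') j' x, ⟨x, hxD, rfl⟩, ?_⟩
    · exact (sub'_posSemidef_iff hcast (isSymm_of_isHermitian hp₁'.1)).2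
        (fun u _ => by have := hp₁'.dotProduct_mulVec_nonneg u; rwa [star_eq_self] at this)
    · have hdiff : sub' (n - j) (n - j') (j' - j) p₁ - sub' n (n - j') j' x
          = sub' (n - j) (n - j') (j' - j) (p₁ - sub' n (n - j) j x) := by
        rw [sub'_sub, sub'_sub' hjj' hj'n]
      rw [dist_eq_norm, hdiff]
      calc ‖sub' (n - j) (n - j') (j' - j) (p₁ - sub' n (n - j) j x)‖
          ≤ ‖p₁ - sub' n (n - j) j x‖ := norm_sub'_le (by omega) _
        _ = dist p₁ (sub' n (n - j) j x) := (dist_eq_norm _ _).symm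
        _ < ε := hd
  have hZup : sdist (PSD (n - j')) Dj' = 0 → sdist (PSD (n - j)) Dj = 0 := by
    intro hz
    refine sdist_eq_zero_of fun ε hε => ?_
    have hCne : (PSD (n - j')).Nonempty := ⟨0, psd_zero⟩
    obtain ⟨p₀, hp₀, u, hu, hd⟩ := exists_of_sdist_eq_zero hCne hDj'ne hz (ε/2) (by linarith)
    obtain ⟨x, hxD, rfl⟩ := hu
    have hp₀' : p₀.PosSemidef := hp₀
    obtain ⟨t, P, hPpsd, hPle⟩ := S2 hjj' hj'n ha (hsym x hxD) haS hp₀'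
      (δ := ε/4) (by linarith)
    refine ⟨P, hPpsd, sub' n (n - j) j (x + t • a),
      ⟨x + t • a, affSet_add_mem haL hxD t, rfl⟩, ?_⟩
    rw [dist_eq_norm]
    have hdn : ‖p₀ - sub' n (n - j') j' x‖ = dist p₀ (sub' n (n - j') j' x) :=
      (dist_eq_norm _ _).symm
    calc ‖P - sub' n (n - j) j (x + t • a)‖ ≤ ‖p₀ - sub' n (n - j') j' x‖ + ε/4 := hPle
      _ < ε/2 + ε/4 := by rw [hdn]; linarith
      _ < ε := by linarith
  constructor
  · rintro (⟨hF, hnP⟩ | ⟨hnF, hZ⟩)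
    · exact Or.inl ⟨hPSD hF, fun hP' => hnP (hPD.2 hP')⟩
    · have hnP' : ¬ ∃ u ∈ Dj', u.PosDef := fun hP' =>
        hnF (let ⟨u, hu, hpd⟩ := hPD.2 hP'; ⟨u, hu, hpd.posSemidef⟩)
      by_cases hF' : ∃ u ∈ Dj', u.PosSemidef
      · exact Or.inl ⟨hF', hnP'⟩
      · exact Or.inr ⟨hF', hZdown hZ⟩
  · rintro (⟨hF', hnP'⟩ | ⟨hnF', hZ'⟩)
    · have hnP : ¬ ∃ u ∈ Dj, u.PosDef := fun hP => hnP' (hPD.1 hP)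
      by_cases hF : ∃ u ∈ Dj, u.PosSemidef
      · exact Or.inl ⟨hF, hnP⟩
      · exact Or.inr ⟨hF, hZup (sdist_zero_of_feas hF')⟩
    · have hnP : ¬ ∃ u ∈ Dj, u.PosDef := fun hP =>
        hnF' (let ⟨u, hu, hpd⟩ := hPD.1 hP; ⟨u, hu, hpd.posSemidef⟩)
      have hnF : ¬ ∃ u ∈ Dj, u.PosSemidef := fun hF => hnF' (hPSD hF)
      exact Or.inr ⟨hnF, hZup hZ'⟩

end stepmain
section final
variable {q : ℕ}

def quadLM (v : Fin q → ℝ) : MS q →ₗ[ℝ] ℝ where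
  toFun := fun x => v ⬝ᵥ x *ᵥ v
  map_add' := by
    intro x y
    show v ⬝ᵥ (x + y) *ᵥ v = v ⬝ᵥ x *ᵥ v + v ⬝ᵥ y *ᵥ v
    rw [Matrix.add_mulVec, dotProduct_add]
  map_smul' := by
    intro t x
    show v ⬝ᵥ (t • x) *ᵥ v = t * (v ⬝ᵥ x *ᵥ v)
    rw [Matrix.smul_mulVec, dotProduct_smul, smul_eq_mul]

def transpLM : MS q →ₗ[ℝ] MS q where
  toFun := Matrix.transpose
  map_add' := Matrix.transpose_add
  map_smul' := Matrix.transpose_smul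

lemma isClosed_PSD : IsClosed (PSD q) := by
  have hset : PSD q = {x : MS q | transpLM x = x} ∩
      ⋂ v : Fin q → ℝ, (quadLM v) ⁻¹' (Set.Ici 0) := by
    ext x
    constructor
    · intro hx
      refine ⟨isSymm_of_isHermitian hx.1, Set.mem_iInter.2 fun v => ?_⟩
      have := hx.dotProduct_mulVec_nonneg v
      rw [star_eq_self] at this
      exact this
    · rintro ⟨h1, h2⟩
      refine Matrix.PosSemidef.of_dotProduct_mulVec_nonneg (isHermitian_of_isSymm h1) fun v => ?_
      rw [star_eq_self]
      exact Set.mem_iInter.1 h2 v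
  rw [hset]
  refine IsClosed.inter ?_ (isClosed_iInter fun v => ?_)
  · exact isClosed_eq transpLM.continuous_of_finiteDimensional continuous_id
  · exact IsClosed.preimage (quadLM v).continuous_of_finiteDimensional isClosed_Ici

lemma psd_smul {z : MS q} (hz : z.PosSemidef) {s : ℝ} (hs : 0 ≤ s) : (s • z).PosSemidef := by
  refine Matrix.PosSemidef.of_dotProduct_mulVec_nonneg ?_ ?_
  · have h1 : (s • z)ᴴ = s • zᴴ := by
      ext i j
      simp [Matrix.conjTranspose_apply]
    show (s • z)ᴴ = s • z
    rw [h1, hz.1]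
  · intro v
    rw [Matrix.smul_mulVec, dotProduct_smul, smul_eq_mul]
    exact mul_nonneg hs (hz.dotProduct_mulVec_nonneg v)

lemma infDist_smul_le {s : ℝ} (hs : 0 < s) (z : MS q) :
    Metric.infDist (s • z) (PSD q) ≤ s * Metric.infDist z (PSD q) := by
  have hne : (PSD q).Nonempty := ⟨0, psd_zero⟩
  refine le_of_forall_pos_le_add fun ε hε => ?_
  have hlt : Metric.infDist z (PSD q) < Metric.infDist z (PSD q) + s⁻¹ * ε := by
    have : 0 < s⁻¹ * ε := mul_pos (inv_pos.2 hs) hε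
    linarith
  obtain ⟨p, hp, hdp⟩ := (Metric.infDist_lt_iff hne).1 hlt
  have h1 : Metric.infDist (s • z) (PSD q) ≤ dist (s • z) (s • p) :=
    Metric.infDist_le_dist_of_mem (psd_smul hp hs.le)
  have h2 : dist (s • z) (s • p) = s * dist z p := by
    rw [dist_eq_norm, dist_eq_norm, ← smul_sub, norm_smul, Real.norm_eq_abs,
      abs_of_pos hs]
  have h3 : s * dist z p < s * Metric.infDist z (PSD q) + ε := by
    have := mul_lt_mul_of_pos_left hdp hs
    rw [mul_add, ← mul_assoc, mul_inv_cancel₀ (ne_of_gt hs), one_mul] at this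
    linarith
  linarith [h1.trans_eq h2]

lemma final (M : Submodule ℝ (MS q)) (e : MS q)
    (hmax : ∀ u ∈ (M : Set (MS q)), u.PosSemidef → u = 0)
    (hz : sdist (PSD q) (affSet M e) = 0) : ∃ u ∈ affSet M e, u.PosSemidef := by
  classical
  set g : MS q → ℝ := fun z => Metric.infDist z (PSD q) with hg
  have hPSDne : (PSD q).Nonempty := ⟨0, psd_zero⟩
  have hgnn : ∀ z, 0 ≤ g z := fun z => Metric.infDist_nonneg
  have hgcont : Continuous g := Metric.continuous_infDist_pt _
  have hMclosed : IsClosed (M : Set (MS q)) := Submodule.closed_of_finiteDimensional M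
  -- coercivity constant
  have hc₀ : ∃ c₀ > (0:ℝ), ∀ l ∈ M, c₀ * ‖l‖ ≤ g l := by
    set S : Set (MS q) := (M : Set (MS q)) ∩ Metric.sphere 0 1 with hS
    by_cases hSne : S.Nonempty
    · have hScomp : IsCompact S :=
        Metric.isCompact_of_isClosed_isBounded
          (hMclosed.inter Metric.isClosed_sphere)
          ((Metric.isBounded_closedBall (x := (0 : MS q)) (r := 1)).subset
            (Set.inter_subset_right.trans Metric.sphere_subset_closedBall))
      obtain ⟨s₀, hs₀S, hmin⟩ := hScomp.exists_isMinOn hSne hgcont.continuousOn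
      have hs₀norm : ‖s₀‖ = 1 := by
        have := hs₀S.2
        rwa [mem_sphere_zero_iff_norm] at this
      have hc₀pos : 0 < g s₀ := by
        rcases lt_or_eq_of_le (hgnn s₀) with h | h
        · exact h
        · exfalso
          have hs₀psd : s₀ ∈ PSD q :=
            (isClosed_PSD.mem_iff_infDist_zero hPSDne).2 h.symm
          have := hmax s₀ hs₀S.1 hs₀psd
          rw [this] at hs₀norm
          simp at hs₀norm
      refine ⟨g s₀, hc₀pos, fun l hl => ?_⟩
      by_cases hl0 : l = 0
      · subst hl0; simp [hgnn]
      · have hnl : 0 < ‖l‖ := norm_pos_iff.2 hl0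
        set u : MS q := ‖l‖⁻¹ • l with hu
        have huS : u ∈ S := by
          refine ⟨M.smul_mem _ hl, ?_⟩
          rw [mem_sphere_zero_iff_norm, hu, norm_smul, Real.norm_eq_abs,
            abs_of_pos (inv_pos.2 hnl), inv_mul_cancel₀ (ne_of_gt hnl)]
        have h1 : g s₀ ≤ g u := hmin huS
        have h2 : g u ≤ ‖l‖⁻¹ * g l := infDist_smul_le (inv_pos.2 hnl) l
        have h3 : g s₀ ≤ ‖l‖⁻¹ * g l := h1.trans h2
        calc g s₀ * ‖l‖ ≤ (‖l‖⁻¹ * g l) * ‖l‖ := mul_le_mul_of_nonneg_right h3 hnl.le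
          _ = g l := by field_simp
    · refine ⟨1, one_pos, fun l hl => ?_⟩
      by_cases hl0 : l = 0
      · subst hl0; simp [hgnn]
      · exfalso
        apply hSne
        have hnl : 0 < ‖l‖ := norm_pos_iff.2 hl0
        refine ⟨‖l‖⁻¹ • l, M.smul_mem _ hl, ?_⟩
        rw [mem_sphere_zero_iff_norm, norm_smul, Real.norm_eq_abs,
          abs_of_pos (inv_pos.2 hnl), inv_mul_cancel₀ (ne_of_gt hnl)]
  obtain ⟨c₀, hc₀pos, hc₀⟩ := hc₀
  set R : ℝ := c₀⁻¹ * (1 + ‖e‖) with hR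
  -- all near-feasible points are bounded
  have hbound : ∀ ε ≤ (1:ℝ), 0 < ε → ∃ l ∈ M, g (l + e) < ε ∧ ‖l‖ ≤ R := by
    intro ε hε1 hεpos
    obtain ⟨p, hp, v, hv, hd⟩ := exists_of_sdist_eq_zero hPSDne (affSet_nonempty M e) hz ε hεpos
    obtain ⟨l, hl, rfl⟩ := hv
    have hgv : g (l + e) < ε := by
      have h1 : g (l + e) ≤ dist (l + e) p := Metric.infDist_le_dist_of_mem hp
      rw [dist_comm] at h1
      exact lt_of_le_of_lt h1 hd
    refine ⟨l, hl, hgv, ?_⟩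
    have h2 : g l ≤ g (l + e) + dist l (l + e) := Metric.infDist_le_infDist_add_dist
    have h3 : dist l (l + e) = ‖e‖ := by
      rw [dist_eq_norm]
      simp
    have h4 : c₀ * ‖l‖ ≤ g l := hc₀ l hl
    have h5 : c₀ * ‖l‖ ≤ 1 + ‖e‖ := by
      rw [h3] at h2
      linarith
    have h6 : c₀⁻¹ * (c₀ * ‖l‖) ≤ c₀⁻¹ * (1 + ‖e‖) :=
      mul_le_mul_of_nonneg_left h5 (inv_pos.2 hc₀pos).le
    rwa [← mul_assoc, inv_mul_cancel₀ (ne_of_gt hc₀pos), one_mul] at h6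
  set K : Set (MS q) := (M : Set (MS q)) ∩ Metric.closedBall 0 R with hK
  have hKcomp : IsCompact K :=
    Metric.isCompact_of_isClosed_isBounded (hMclosed.inter Metric.isClosed_closedBall)
      (Metric.isBounded_closedBall.subset Set.inter_subset_right)
  have hKne : K.Nonempty := by
    obtain ⟨l, hl, _, hln⟩ := hbound 1 le_rfl one_pos
    exact ⟨l, hl, by rwa [Metric.mem_closedBall, dist_zero_right]⟩
  have hφcont : Continuous fun l : MS q => g (l + e) :=
    hgcont.comp (continuous_add_right e)
  obtain ⟨l₁, hl₁K, hminK⟩ := hKcomp.exists_isMinOn hKne hφcont.continuousOn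
  have hφ0 : g (l₁ + e) = 0 := by
    refine le_antisymm ?_ (hgnn _)
    by_contra hpos
    push_neg at hpos
    set ε : ℝ := min (g (l₁ + e)) 1 with hε
    have hεpos : 0 < ε := lt_min hpos one_pos
    obtain ⟨l, hl, hgl, hln⟩ := hbound ε (min_le_right _ _) hεpos
    have hlK : l ∈ K := ⟨hl, by rwa [Metric.mem_closedBall, dist_zero_right]⟩
    have hmk : g (l₁ + e) ≤ g (l + e) := hminK hlK
    have hεle : ε ≤ g (l₁ + e) := min_le_left _ _
    linarith
  have hmem : l₁ + e ∈ PSD q := (isClosed_PSD.mem_iff_infDist_zero hPSDne).2 hφ0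
  exact ⟨l₁ + e, ⟨l₁, hl₁K.1, rfl⟩, hmem⟩

end final
lemma sub'_zero (n : ℕ) (x : MS n) : sub' n (n - 0) 0 x = x := by
  funext r s
  have hr : (0:ℕ) + r.1 < n := by have := r.2; omega
  have hs : (0:ℕ) + s.1 < n := by have := s.2; omega
  show (if h : 0 + r.1 < n ∧ 0 + s.1 < n then x ⟨0 + r.1, h.1⟩ ⟨0 + s.1, h.2⟩ else 0) = x r s
  rw [dif_pos ⟨hr, hs⟩]
  congr 1 <;> exact Fin.ext (by simp)

lemma image_affSet (p q d : ℕ) (L : Submodule ℝ (MS p)) (c : MS p) :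
    sub' p q d '' affSet L c = affSet (L.map (sub'L p q d)) (sub' p q d c) := by
  ext u
  constructor
  · rintro ⟨x, ⟨l, hl, rfl⟩, rfl⟩
    exact ⟨sub' p q d l, Submodule.mem_map_of_mem hl, by rw [sub'_add]⟩
  · rintro ⟨l', hl', rfl⟩
    obtain ⟨l, hl, rfl⟩ := Submodule.mem_map.1 hl'
    exact ⟨l + c, ⟨l, hl, rfl⟩, by rw [sub'_add]; rfl⟩

lemma N_le (N : ℕ → ℕ) (k : ℕ → ℕ) (hNsucc : ∀ i, N (i + 1) = N i + k i) :
    ∀ i i', i ≤ i' → N i ≤ N i' := by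
  intro i i' h
  induction i' with
  | zero =>
    have : i = 0 := Nat.le_zero.1 h
    rw [this]
  | succ m ih =>
    by_cases hi : i ≤ m
    · exact (ih hi).trans (by rw [hNsucc]; omega)
    · have : i = m + 1 := by omega
      rw [this]

end St11

/-- Given a maximal hyper feasible partition `A 0, …, A (m−1) ∈ L` in staircase
shape (maximality: the only positive semidefinite matrix in `π̄_{N m}(L)` is zero),
`(K_n, L, c)` is in weak status iff the subproblem
`(K_{n−N m}, π̄_{N m}(L), π̄_{N m}(c))`, whose affine feasible set is
`π̄_{N m}(L + c)`, is weakly feasible. -/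
theorem stmt11 (n m : ℕ) (L : Submodule ℝ (MS n)) (hL : ∀ y ∈ L, y.IsSymm)
    (c : MS n) (hc : c.IsSymm)
    (k : ℕ → ℕ) (hk : ∀ i < m, 0 < k i)
    (N : ℕ → ℕ) (hN0 : N 0 = 0) (hNsucc : ∀ i, N (i + 1) = N i + k i)
    (hNm : N m ≤ n)
    (A : ℕ → MS n) (hAL : ∀ i < m, A i ∈ L)
    (hstair : ∀ i < m, staircase n (N i) (N (i + 1)) (A i))
    (hmax : ∀ u ∈ blk n (N m) n '' (L : Set (MS n)), u.PosSemidef → u = 0) :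
    weakStatus (affSet L c) ↔ weaklyFeasible (blk n (N m) n '' affSet L c) := by
  open St11 in
  show weakStatus (affSet L c) ↔
      weaklyFeasible (St11.sub' n (n - N m) (N m) '' affSet L c)
  have hchain : ∀ i, i ≤ m →
      (weakStatus (affSet L c) ↔
        weakStatus (St11.sub' n (n - N i) (N i) '' affSet L c)) := by
    intro i hi
    induction i with
    | zero =>
      rw [hN0]
      have hfun : St11.sub' n (n - 0) 0 = (id : MS n → MS n) :=
        funext (St11.sub'_zero n)
      rw [hfun, Set.image_id]
    | succ i ih =>
      have hi' : i ≤ m := by omega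
      have hiI : i < m := by omega
      rw [ih hi']
      refine St11.step ?_ ?_ hL hc (hAL i hiI) (hstair i hiI)
      · rw [hNsucc]; omega
      · exact (St11.N_le N k hNsucc (i+1) m hi).trans hNm
  rw [hchain m le_rfl]
  constructor
  · rintro (⟨hF, hnP⟩ | ⟨hnF, hZ⟩)
    · exact ⟨hF, hnP⟩
    · exfalso
      have himg : St11.sub' n (n - N m) (N m) '' affSet L c =
          affSet (L.map (St11.sub'L n (n - N m) (N m)))
            (St11.sub' n (n - N m) (N m) c) := St11.image_affSet n (n - N m) (N m) L c
      have hmax' : ∀ u ∈ ((L.map (St11.sub'L n (n - N m) (N m))) : Set (MS (n - N m))),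
          u.PosSemidef → u = 0 := by
        intro u hu hpsd
        refine hmax u ?_ hpsd
        obtain ⟨l, hl, rfl⟩ := Submodule.mem_map.1 hu
        exact ⟨l, hl, rfl⟩
      have hfeas := St11.final _ _ hmax' (by rw [← himg]; exact hZ)
      rw [← himg] at hfeas
      exact hnF hfeas
  · intro h
    exact Or.inl h
end
end

section
/- Let L ⊆ S_n be a linear subspace. Then L ∩ K_n = {0} (i.e. the zero matrix is the only positive semidefinite matrix in L) if and only if the orthogonal complement L^⊥ (with respect to the trace inner product) contains a positive definite matrix. -/
open Matrix

noncomputable section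

instance MS.locallyConvex (n : ℕ) : LocallyConvexSpace ℝ (MS n) :=
  Pi.locallyConvexSpace (𝕜 := ℝ)

lemma quad_expand {n : ℕ} (x : MS n) (v : Fin n → ℝ) :
    v ⬝ᵥ x *ᵥ v = ∑ i, ∑ j, v i * (x i j * v j) := by
  simp [dotProduct, mulVec, Finset.mul_sum]

lemma quad_pair {n : ℕ} (x : MS n) (a b : Fin n) (hab : a ≠ b) (c d : ℝ) :
    (fun i => (if i = a then c else 0) + (if i = b then d else 0)) ⬝ᵥ
      x *ᵥ (fun i => (if i = a then c else 0) + (if i = b then d else 0)) =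
      c * (x a a * c) + c * (x a b * d) + (d * (x b a * c) + d * (x b b * d)) := by
  rw [quad_expand]
  simp [add_mul, mul_add, Finset.sum_add_distrib, ite_mul, mul_ite,
    Finset.sum_ite_eq', hab, hab.symm]
  ring

lemma quad_single {n : ℕ} (x : MS n) (a : Fin n) :
    (fun i => if i = a then (1:ℝ) else 0) ⬝ᵥ x *ᵥ (fun i => if i = a then (1:ℝ) else 0)
      = x a a := by
  rw [quad_expand]
  simp [ite_mul, mul_ite, Finset.sum_ite_eq']

lemma psd_quad {n : ℕ} {x : MS n} (hx : x.PosSemidef) (v : Fin n → ℝ) :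
    0 ≤ v ⬝ᵥ x *ᵥ v := by simpa [star_trivial] using hx.dotProduct_mulVec_nonneg v

lemma diag_nonneg {n : ℕ} {x : MS n} (hx : x.PosSemidef) (a : Fin n) : 0 ≤ x a a := by
  have := psd_quad hx (fun i => if i = a then (1:ℝ) else 0)
  rwa [quad_single] at this

lemma diag_le_trace {n : ℕ} {x : MS n} (hx : x.PosSemidef) (a : Fin n) :
    x a a ≤ x.trace := by
  have : x.trace = ∑ i, x i i := rfl
  rw [this]
  exact Finset.single_le_sum (fun i _ => diag_nonneg hx i) (Finset.mem_univ a)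

lemma pair_diag_le_trace {n : ℕ} {x : MS n} (hx : x.PosSemidef) {a b : Fin n} (hab : a ≠ b) :
    x a a + x b b ≤ x.trace := by
  have : x.trace = ∑ i, x i i := rfl
  rw [this]
  have h := Finset.sum_le_sum_of_subset_of_nonneg (f := fun i => x i i)
    (Finset.subset_univ ({a, b} : Finset (Fin n))) (fun i _ _ => diag_nonneg hx i)
  rwa [Finset.sum_pair hab] at h

lemma entry_bound {n : ℕ} {x : MS n} (hx : x.PosSemidef) (ht : x.trace = 1) (i j : Fin n) :
    x i j ∈ Set.Icc (-1 : ℝ) 1 := by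
  rcases eq_or_ne i j with rfl | hij
  · exact ⟨le_trans (by norm_num) (diag_nonneg hx i),
      by rw [← ht]; exact diag_le_trace hx i⟩
  · have hsym : x j i = x i j := by
      have := congrFun (congrFun hx.1 i) j
      simpa [conjTranspose_apply] using this
    have h1 := psd_quad hx (fun k => (if k = i then (1:ℝ) else 0) + (if k = j then (1:ℝ) else 0))
    have h2 := psd_quad hx (fun k => (if k = i then (1:ℝ) else 0) + (if k = j then (-1:ℝ) else 0))
    rw [quad_pair x i j hij] at h1 h2
    have hd := pair_diag_le_trace hx hij
    rw [ht] at hd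
    constructor
    · nlinarith [diag_nonneg hx i, diag_nonneg hx j]
    · nlinarith [diag_nonneg hx i, diag_nonneg hx j]

lemma cont_entry {n : ℕ} (i j : Fin n) : Continuous fun x : MS n => x i j :=
  (continuous_apply j).comp (continuous_apply i)

lemma cont_quad {n : ℕ} (v : Fin n → ℝ) : Continuous fun x : MS n => v ⬝ᵥ x *ᵥ v := by
  have : (fun x : MS n => v ⬝ᵥ x *ᵥ v) = fun x => ∑ i, ∑ j, v i * (x i j * v j) := by
    funext x; exact quad_expand x v
  rw [this]
  exact continuous_finset_sum _ fun i _ => continuous_finset_sum _ fun j _ =>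
    (continuous_const.mul (((cont_entry i j).mul continuous_const)))

lemma cont_trace {n : ℕ} : Continuous fun x : MS n => x.trace := by
  have : (fun x : MS n => x.trace) = fun x => ∑ i, x i i := rfl
  rw [this]
  exact continuous_finset_sum _ fun i _ => cont_entry i i

lemma isClosed_delta {n : ℕ} :
    IsClosed {x : MS n | x.PosSemidef ∧ x.trace = 1} := by
  have h1 : {x : MS n | x.PosSemidef ∧ x.trace = 1} =
      ((⋂ i, ⋂ j, {x : MS n | x i j = x j i}) ∩ ⋂ v : Fin n → ℝ, {x | 0 ≤ v ⬝ᵥ x *ᵥ v})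
        ∩ {x | x.trace = 1} := by
    ext x
    simp only [Set.mem_setOf_eq, Set.mem_inter_iff, Set.mem_iInter]
    constructor
    · rintro ⟨⟨hh, hq⟩, ht⟩
      refine ⟨⟨fun i j => ?_, fun v => by simpa [star_trivial] using (PosSemidef.dotProduct_mulVec_nonneg ⟨hh, hq⟩ v)⟩, ht⟩
      have := congrFun (congrFun hh j) i
      simpa [conjTranspose_apply] using this
    · rintro ⟨⟨hh, hq⟩, ht⟩
      refine ⟨posSemidef_iff_dotProduct_mulVec.mpr ⟨?_, fun v => by simpa [star_trivial] using hq v⟩, ht⟩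
      ext i j
      simpa [conjTranspose_apply] using (hh j i)
  rw [h1]
  refine IsClosed.inter (IsClosed.inter ?_ ?_) ?_
  · exact isClosed_iInter fun i => isClosed_iInter fun j =>
      isClosed_eq (cont_entry i j) (cont_entry j i)
  · exact isClosed_iInter fun v => isClosed_le continuous_const (cont_quad v)
  · exact isClosed_eq cont_trace continuous_const

lemma isCompact_delta {n : ℕ} :
    IsCompact {x : MS n | x.PosSemidef ∧ x.trace = 1} := by
  have hsub : {x : MS n | x.PosSemidef ∧ x.trace = 1} ⊆
      (Set.univ : Set (Fin n)).pi fun _ => (Set.univ : Set (Fin n)).pi fun _ =>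
        Set.Icc (-1:ℝ) 1 := by
    rintro x ⟨hx, ht⟩ i _ j _
    exact entry_bound hx ht i j
  exact IsCompact.of_isClosed_subset
    (isCompact_univ_pi fun i => isCompact_univ_pi fun j => isCompact_Icc)
    isClosed_delta hsub

lemma convex_delta {n : ℕ} : Convex ℝ {x : MS n | x.PosSemidef ∧ x.trace = 1} := by
  rintro x ⟨hx, hxt⟩ z ⟨hz, hzt⟩ a b ha hb hab
  refine ⟨posSemidef_iff_dotProduct_mulVec.mpr ⟨?_, fun v => ?_⟩, ?_⟩
  · show (a • x + b • z)ᴴ = a • x + b • z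
    have hxs : xᵀ = x := by rw [← conjTranspose_eq_transpose_of_trivial, hx.1]
    have hzs : zᵀ = z := by rw [← conjTranspose_eq_transpose_of_trivial, hz.1]
    simp [conjTranspose_add, conjTranspose_smul, hxs, hzs]
  · simp only [star_trivial, add_mulVec, smul_mulVec, dotProduct_add, dotProduct_smul,
      smul_eq_mul]
    exact add_nonneg (mul_nonneg ha (psd_quad hx v)) (mul_nonneg hb (psd_quad hz v))
  · rw [trace_add, trace_smul, trace_smul, hxt, hzt]
    simpa using hab

lemma trace_repr {n : ℕ} (f : MS n →L[ℝ] ℝ) (x : MS n) :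
    ((Matrix.of fun i j => f (Matrix.single j i 1)) * x).trace = f x := by
  conv_rhs => rw [matrix_eq_sum_single x]
  rw [map_sum]
  rw [Matrix.trace]
  simp only [diag_apply, mul_apply, of_apply]
  rw [Finset.sum_comm]
  refine Finset.sum_congr rfl fun i _ => ?_
  rw [map_sum]
  refine Finset.sum_congr rfl fun j _ => ?_
  have : Matrix.single i j (x i j) = x i j • Matrix.single i j 1 := by
    rw [smul_single, smul_eq_mul, mul_one]
  rw [this, f.map_smul, smul_eq_mul, mul_comm]

lemma quad_vecMulVec {n : ℕ} (w v : Fin n → ℝ) :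
    v ⬝ᵥ (vecMulVec w w) *ᵥ v = (∑ i, w i * v i) * (∑ i, w i * v i) := by
  rw [quad_expand, Finset.sum_mul_sum]
  exact Finset.sum_congr rfl fun i _ => Finset.sum_congr rfl fun j _ => by
    rw [vecMulVec_apply]; ring

lemma vecMulVec_symm {n : ℕ} (w : Fin n → ℝ) : (vecMulVec w w).IsSymm := by
  ext i j
  simp [vecMulVec_apply, mul_comm]

lemma trace_vecMulVec' {n : ℕ} (w : Fin n → ℝ) :
    (vecMulVec w w).trace = ∑ i, w i * w i := by
  simp [Matrix.trace, vecMulVec_apply]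

lemma trace_mul_vecMulVec {n : ℕ} (A : MS n) (w : Fin n → ℝ) :
    (A * vecMulVec w w).trace = w ⬝ᵥ A *ᵥ w := by
  simp only [Matrix.trace, diag_apply, mul_apply, vecMulVec_apply, dotProduct, mulVec,
    Finset.mul_sum]
  exact Finset.sum_congr rfl fun i _ => Finset.sum_congr rfl fun j _ => by ring

-- trace of symmetrized product against a symmetric matrix
lemma trace_symmetrize {n : ℕ} (y x : MS n) (hx : x.IsSymm) :
    ((((1:ℝ)/2) • (y + yᵀ)) * x).trace = (y * x).trace := by
  rw [smul_mul, trace_smul, add_mul, trace_add]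
  have h : (yᵀ * x).trace = (y * x).trace := by
    rw [← trace_transpose (yᵀ * x), transpose_mul, transpose_transpose, hx,
      trace_mul_comm]
  rw [h, smul_eq_mul]
  ring

/-- For a linear subspace `L` of the symmetric `n×n` matrices, the zero matrix is the
only positive semidefinite matrix in `L` if and only if the orthogonal complement
`L^⊥` of `L` in `S_n` (w.r.t. the trace inner product `⟨y, x⟩ = tr(yx)`) contains
a positive definite matrix. -/
theorem stmt12 (n : ℕ) (L : Submodule ℝ (MS n)) (hL : ∀ x ∈ L, x.IsSymm) :
    (∀ x ∈ L, x.PosSemidef → x = 0) ↔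
      ∃ y : MS n, y.IsSymm ∧ (∀ l ∈ L, (y * l).trace = 0) ∧ y.PosDef := by
  constructor
  · intro h
    -- separate the compact convex set Δ from the closed subspace L
    have hdisj : Disjoint {x : MS n | x.PosSemidef ∧ x.trace = 1} (L : Set (MS n)) := by
      rw [Set.disjoint_left]
      rintro x ⟨hpsd, ht⟩ hxL
      have := h x hxL hpsd
      rw [this, trace_zero] at ht
      norm_num at ht
    obtain ⟨f, u, v, hfu, huv, hvf⟩ := geometric_hahn_banach_compact_closed
      convex_delta isCompact_delta L.convex (Submodule.closed_of_finiteDimensional L) hdisj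
    -- f vanishes on L
    have hfL : ∀ l ∈ L, f l = 0 := by
      intro l hl
      by_contra hne
      have hmem : ((v - 1) / f l) • l ∈ L := L.smul_mem _ hl
      have := hvf _ hmem
      rw [f.map_smul, smul_eq_mul, div_mul_cancel₀ _ hne] at this
      linarith
    have hv0 : v < 0 := by
      have := hvf 0 L.zero_mem
      simpa using this
    -- the functional F := -f is positive on Δ and vanishes on L
    set F : MS n →L[ℝ] ℝ := -f with hF
    have hFL : ∀ l ∈ L, F l = 0 := by
      intro l hl; simp [hF, hfL l hl]
    have hFpos : ∀ x ∈ {x : MS n | x.PosSemidef ∧ x.trace = 1}, 0 < F x := by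
      intro x hx
      have := hfu x hx
      simp only [hF, ContinuousLinearMap.neg_apply]
      linarith
    -- represent F by a matrix and symmetrize
    set y : MS n := Matrix.of fun i j => F (Matrix.single j i 1) with hy
    have htr : ∀ x : MS n, (y * x).trace = F x := fun x => trace_repr F x
    set y' : MS n := ((1:ℝ)/2) • (y + yᵀ) with hy'
    have hy'symm : y'.IsSymm := by
      rw [hy', Matrix.IsSymm, transpose_smul, transpose_add, transpose_transpose, add_comm]
    have htr' : ∀ x : MS n, x.IsSymm → (y' * x).trace = F x := by
      intro x hx
      rw [hy', trace_symmetrize y x hx, htr]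
    refine ⟨y', hy'symm, fun l hl => by rw [htr' l (hL l hl), hFL l hl], ?_⟩
    rw [posDef_iff_dotProduct_mulVec]
    constructor
    · show y'ᴴ = y'
      rw [conjTranspose_eq_transpose_of_trivial, hy'symm]
    · intro w hw
      rw [star_trivial]
      -- the normalized rank-one matrix lies in Δ
      set s : ℝ := ∑ i, w i * w i with hs
      have hspos : 0 < s := by
        obtain ⟨i, hi⟩ := Function.ne_iff.mp hw
        exact Finset.sum_pos' (fun j _ => mul_self_nonneg (w j))
          ⟨i, Finset.mem_univ i, mul_self_pos.mpr hi⟩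
      have hx0 : (s⁻¹ • vecMulVec w w) ∈ {x : MS n | x.PosSemidef ∧ x.trace = 1} := by
        refine ⟨posSemidef_iff_dotProduct_mulVec.mpr ⟨?_, fun v => ?_⟩, ?_⟩
        · show (s⁻¹ • vecMulVec w w)ᴴ = s⁻¹ • vecMulVec w w
          rw [conjTranspose_eq_transpose_of_trivial, transpose_smul, vecMulVec_symm]
        · rw [star_trivial, smul_mulVec, dotProduct_smul, smul_eq_mul, quad_vecMulVec]
          exact mul_nonneg (inv_nonneg.mpr hspos.le) (mul_self_nonneg _)
        · rw [trace_smul, trace_vecMulVec', ← hs, smul_eq_mul, inv_mul_cancel₀ hspos.ne']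
      have hFx0 := hFpos _ hx0
      have hsymm0 : (s⁻¹ • vecMulVec w w).IsSymm := by
        rw [Matrix.IsSymm, transpose_smul, vecMulVec_symm]
      have heval : F (s⁻¹ • vecMulVec w w) = s⁻¹ * (w ⬝ᵥ y' *ᵥ w) := by
        rw [← htr' _ hsymm0, mul_smul_comm, trace_smul, smul_eq_mul, trace_mul_vecMulVec]
      rw [heval] at hFx0
      by_contra hnp
      push_neg at hnp
      have : s⁻¹ * (w ⬝ᵥ y' *ᵥ w) ≤ 0 :=
        mul_nonpos_of_nonneg_of_nonpos (inv_nonneg.mpr hspos.le) hnp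
      linarith
  · rintro ⟨y, hsym, horth, hpd⟩ x hxL hxpsd
    obtain ⟨B, rfl⟩ : ∃ B : MS n, x = Bᴴ * B := by
      open scoped MatrixOrder in exact CStarAlgebra.nonneg_iff_eq_star_mul_self.mp hxpsd.nonneg
    have h0 : (y * (Bᴴ * B)).trace = 0 := horth _ hxL
    have key : (B * y * Bᴴ).trace = 0 := by
      rw [← h0, trace_mul_comm (B*y) Bᴴ, ← mul_assoc, trace_mul_comm y (Bᴴ*B)]
    have hdiag : ∀ i, (B * y * Bᴴ) i i = (B i) ⬝ᵥ y *ᵥ (B i) := by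
      intro i
      simp only [mul_apply, conjTranspose_apply, dotProduct, mulVec, star_trivial]
      simp only [Finset.sum_mul, Finset.mul_sum]
      rw [Finset.sum_comm]
      exact Finset.sum_congr rfl fun j _ => Finset.sum_congr rfl fun k _ => by ring
    have hnn : ∀ i, 0 ≤ (B * y * Bᴴ) i i := fun i => by
      rw [hdiag i]
      simpa [star_trivial] using hpd.posSemidef.dotProduct_mulVec_nonneg (B i)
    have hzero : ∀ i ∈ Finset.univ, (B * y * Bᴴ) i i = 0 := by
      rw [← Finset.sum_eq_zero_iff_of_nonneg (fun i _ => hnn i)]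
      exact key
    have hB : B = 0 := by
      ext i j
      by_contra hij
      have hBi : B i ≠ 0 := fun hc => hij (by rw [hc]; rfl)
      have hlt := (posDef_iff_dotProduct_mulVec.mp hpd).2 hBi
      rw [star_trivial] at hlt
      have h2 := hzero i (Finset.mem_univ i)
      rw [hdiag i] at h2
      exact absurd h2 (ne_of_gt hlt)
    rw [hB]
    simp
end
end
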